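/- arXiv:1311.5471 — 3 statements merged into one kernel-verified Lean document; each statement's English description precedes it below -/
import Mathlib

section
/- Let F be a bipartite graph with m edges and no isolated vertices. Then the 2-color Ramsey number of F satisfies r_2(F) ≤ 2^6 · m^{3/2} · 2^{2√(2m) + 1/2}; in particular r_2(F) ≤ 2^{(1+o(1)) 2√(2m)} as m → ∞. -/
open SimpleGraph Finset

/-- Given a `k`-coloring `C` of the edges of the complete graph on `Fin N`,
`monoCopyIn F C` says that some color class contains a copy of the graph `F`,
i.e. there is a color `c` and an injective graph homomorphism from `F` into the
graph of `c`-colored edges. -/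
def monoCopyIn {V : Type*} (F : SimpleGraph V) {N k : ℕ}
    (C : Sym2 (Fin N) → Fin k) : Prop :=
  ∃ c : Fin k, ∃ f : F →g SimpleGraph.fromRel (fun u v => C s(u, v) = c),
    Function.Injective f

/-- The multicolor Ramsey number `r_k(F)`: the least `N` such that every
`k`-coloring of the edges of `K_N` contains a monochromatic copy of `F`. -/
noncomputable def multiRamsey {V : Type*} (F : SimpleGraph V) (k : ℕ) : ℕ :=
  sInf {N | ∀ C : Sym2 (Fin N) → Fin k, monoCopyIn F C}

section DRC
variable {N : ℕ} (G : SimpleGraph (Fin N)) [DecidableRel G.Adj]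

/-- common neighbors of a finite set of vertices -/
def cnbrs (S : Finset (Fin N)) : Finset (Fin N) :=
  Finset.univ.filter fun w => ∀ s ∈ S, G.Adj s w

lemma cnbrs_anti {S S' : Finset (Fin N)} (h : S ⊆ S') : cnbrs G S' ⊆ cnbrs G S := by
  intro w hw
  simp only [cnbrs, mem_filter, mem_univ, true_and] at *
  exact fun s hs => hw s (h hs)

lemma count_pi {t : ℕ} (s : Finset (Fin N)) :
    #(univ.filter fun T : Fin t → Fin N => ∀ i, T i ∈ s) = #s ^ t := by
  classical
  rw [Finset.card_filter]
  have h1 : ∀ T : Fin t → Fin N,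
      (if (∀ i, T i ∈ s) then (1:ℕ) else 0) = ∏ i : Fin t, (if T i ∈ s then 1 else 0) := by
    intro T
    rw [Finset.prod_boole]
    simp
  simp_rw [h1]
  rw [← Fintype.piFinset_univ,
    Finset.sum_prod_piFinset univ (fun (_ : Fin t) (x : Fin N) => if x ∈ s then (1:ℕ) else 0)]
  simp [Finset.prod_const]

lemma sum_card_ATup (t : ℕ) :
    ∑ T : Fin t → Fin N, #(univ.filter fun v => ∀ i, G.Adj v (T i))
      = ∑ v, (G.degree v) ^ t := by
  classical
  simp only [Finset.card_filter]
  rw [Finset.sum_comm]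
  refine Finset.sum_congr rfl fun v _ => ?_
  have : ∀ T : Fin t → Fin N, (∀ i, G.Adj v (T i)) ↔ (∀ i, T i ∈ G.neighborFinset v) := by
    intro T; simp [SimpleGraph.mem_neighborFinset]
  calc ∑ T : Fin t → Fin N, (if ∀ i, G.Adj v (T i) then (1:ℕ) else 0)
      = ∑ T : Fin t → Fin N, (if ∀ i, T i ∈ G.neighborFinset v then (1:ℕ) else 0) := by
        refine Finset.sum_congr rfl fun T _ => ?_
        simp only [this]
    _ = #(univ.filter fun T : Fin t → Fin N => ∀ i, T i ∈ G.neighborFinset v) := by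
        rw [Finset.card_filter]
    _ = (G.degree v) ^ t := by rw [count_pi]; rfl

lemma sum_card_subset (t : ℕ) (S : Finset (Fin N)) :
    ∑ T : Fin t → Fin N, (if S ⊆ univ.filter (fun v => ∀ i, G.Adj v (T i)) then (1:ℕ) else 0)
      = #(cnbrs G S) ^ t := by
  classical
  have h : ∀ T : Fin t → Fin N,
      (S ⊆ univ.filter fun v => ∀ i, G.Adj v (T i)) ↔ (∀ i, T i ∈ cnbrs G S) := by
    intro T
    constructor
    · intro hs i
      simp only [cnbrs, mem_filter, mem_univ, true_and]
      intro s hs'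
      have := hs hs'
      simp only [mem_filter, mem_univ, true_and] at this
      exact this i
    · intro h s hs
      simp only [mem_filter, mem_univ, true_and]
      intro i
      have := h i
      simp only [cnbrs, mem_filter, mem_univ, true_and] at this
      exact this s hs
  calc ∑ T : Fin t → Fin N, (if S ⊆ univ.filter (fun v => ∀ i, G.Adj v (T i)) then (1:ℕ) else 0)
      = ∑ T : Fin t → Fin N, (if (∀ i, T i ∈ cnbrs G S) then (1:ℕ) else 0) := by
        refine Finset.sum_congr rfl fun T _ => ?_; simp only [h]
    _ = _ := by rw [← Finset.card_filter, count_pi]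

lemma card_eq_pair {t : ℕ} {i j : Fin t} (hij : i ≠ j) :
    #(univ.filter fun T : Fin t → Fin N => T i = T j) ≤ N ^ (t - 1) := by
  classical
  have h1 : #(univ.filter fun T : Fin t → Fin N => T i = T j)
      = Fintype.card {T : Fin t → Fin N // T i = T j} := (Fintype.card_subtype _).symm
  rw [h1]
  have emb : {T : Fin t → Fin N // T i = T j} ↪ ({k : Fin t // k ≠ j} → Fin N) := by
    refine ⟨fun T k => T.1 k.1, ?_⟩
    intro T T' h
    apply Subtype.ext
    funext k
    by_cases hk : k = j
    · have h1 : T.1 i = T'.1 i := by simpa using congrFun h ⟨i, hij⟩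
      rw [hk, ← T.2, ← T'.2]
      exact h1
    · simpa using congrFun h ⟨k, hk⟩
  calc Fintype.card {T : Fin t → Fin N // T i = T j}
      ≤ Fintype.card ({k : Fin t // k ≠ j} → Fin N) := Fintype.card_le_of_embedding emb
    _ = N ^ (t - 1) := by
        rw [Fintype.card_fun]
        congr 1
        · exact Fintype.card_fin N
        · rw [Fintype.card_subtype_compl]
          simp [Fintype.card_subtype_eq]

lemma card_noninj (t : ℕ) :
    #(univ.filter fun T : Fin t → Fin N => ¬ Function.Injective T) ≤ t * t * N ^ (t - 1) := by
  classical
  have hsub : (univ.filter fun T : Fin t → Fin N => ¬ Function.Injective T) ⊆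
      (univ : Finset (Fin t)).offDiag.biUnion
        (fun p => univ.filter fun T : Fin t → Fin N => T p.1 = T p.2) := by
    intro T hT
    rw [mem_filter] at hT
    simp only [mem_univ, true_and, Function.Injective] at hT
    push_neg at hT
    obtain ⟨a, b, hab, hne⟩ := hT
    refine Finset.mem_biUnion.2 ⟨(a, b), ?_, ?_⟩
    · simp [Finset.mem_offDiag, hne]
    · simp [hab]
  calc #(univ.filter fun T : Fin t → Fin N => ¬ Function.Injective T)
      ≤ _ := Finset.card_le_card hsub
    _ ≤ ∑ p ∈ (univ : Finset (Fin t)).offDiag, #(univ.filter fun T : Fin t → Fin N => T p.1 = T p.2) :=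
        Finset.card_biUnion_le
    _ ≤ ∑ _p ∈ (univ : Finset (Fin t)).offDiag, N ^ (t - 1) := by
        refine Finset.sum_le_sum fun p hp => ?_
        exact card_eq_pair (N := N) (Finset.mem_offDiag.1 hp).2.2
    _ ≤ t * t * N ^ (t - 1) := by
        rw [Finset.sum_const, smul_eq_mul]
        have : #(univ : Finset (Fin t)).offDiag ≤ t * t := by
          rw [Finset.offDiag_card]
          simp only [Finset.card_univ, Fintype.card_fin]
          omega
        exact Nat.mul_le_mul_right _ this

lemma nat_bernoulli (N : ℕ) : ∀ t : ℕ, N ^ (t+1) ≤ (N-1)^(t+1) + (t+1) * N^t := by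
  intro t
  induction t with
  | zero =>
    cases N with
    | zero => simp
    | succ n => simp
  | succ t ih =>
    have step : (N-1)^(t+1)*N ≤ (N-1)^(t+2) + N^(t+1) := by
      cases N with
      | zero => simp
      | succ n =>
        simp only [Nat.succ_sub_one]
        calc n^(t+1)*(n+1) = n^(t+2) + n^(t+1) := by ring
          _ ≤ n^(t+2) + (n+1)^(t+1) := by
              gcongr
              omega
    calc N^(t+2) = N^(t+1) * N := by ring
      _ ≤ ((N-1)^(t+1) + (t+1)*N^t) * N := Nat.mul_le_mul_right _ ih
      _ = (N-1)^(t+1)*N + (t+1)*(N^t*N) := by ring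
      _ = (N-1)^(t+1)*N + (t+1)*N^(t+1) := by rw [← pow_succ]
      _ ≤ ((N-1)^(t+2) + N^(t+1)) + (t+1)*N^(t+1) := by omega
      _ = (N-1)^(t+2) + (t+2)*N^(t+1) := by ring

lemma drc (d t K u₀ : ℕ) (ht1 : 1 ≤ t) (hd1 : 1 ≤ d) (hu1 : 1 ≤ u₀) (hdu : d ≤ u₀)
    (hdeg : N * (N - 1) ≤ 2 * ∑ v, G.degree v)
    (hbad : N.choose d * K ^ t ≤ N ^ t)
    (hmain : 2 ^ t * (u₀ + t * t) + t + 1 ≤ N) :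
    ∃ U Ts : Finset (Fin N), #Ts = t ∧ Disjoint U Ts ∧
      (∀ u ∈ U, ∀ v ∈ Ts, G.Adj u v) ∧ u₀ ≤ #U ∧
      ∀ S ⊆ U, #S ≤ d → K ≤ #(cnbrs G S) := by
  classical
  set A : (Fin t → Fin N) → Finset (Fin N) :=
    fun T => univ.filter (fun v => ∀ i, G.Adj v (T i)) with hA
  set badset : Finset (Finset (Fin N)) :=
    (univ.powersetCard d).filter (fun S => #(cnbrs G S) < K) with hbadset
  have hN : 0 < N := by
    have h2 : 1 ≤ 2 ^ t * (u₀ + t * t) + t + 1 := le_add_self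
    omega
  -- step 1 : find a good tuple T
  have hex : ∃ T : Fin t → Fin N, Function.Injective T ∧
      #(badset.filter (· ⊆ A T)) + u₀ ≤ #(A T) := by
    by_contra hcon
    push_neg at hcon
    -- pointwise upper bound
    have hup : ∀ T : Fin t → Fin N, #(A T) ≤ #(badset.filter (· ⊆ A T)) + (u₀ - 1)
        + (if Function.Injective T then 0 else N) := by
      intro T
      by_cases hI : Function.Injective T
      · have := hcon T hI
        simp only [hI, if_true]
        omega
      · simp only [hI, if_false]
        have : #(A T) ≤ N := by
          calc #(A T) ≤ #(univ : Finset (Fin N)) := card_le_card (filter_subset _ _)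
            _ = N := by simp
        omega
    -- sum of the bad terms
    have hbad_sum : ∑ T : Fin t → Fin N, #(badset.filter (· ⊆ A T))
        ≤ N.choose d * K ^ t := by
      have swap : ∑ T : Fin t → Fin N, #(badset.filter (· ⊆ A T))
          = ∑ S ∈ badset, #(cnbrs G S) ^ t := by
        have h1 : ∀ T : Fin t → Fin N, #(badset.filter (· ⊆ A T))
            = ∑ S ∈ badset, if S ⊆ A T then 1 else 0 := fun T => Finset.card_filter _ _
        simp_rw [h1]
        rw [Finset.sum_comm]
        exact Finset.sum_congr rfl fun S _ => sum_card_subset G t S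
      rw [swap]
      calc ∑ S ∈ badset, #(cnbrs G S) ^ t ≤ ∑ _S ∈ badset, K ^ t := by
            refine Finset.sum_le_sum fun S hS => ?_
            have : #(cnbrs G S) < K := (Finset.mem_filter.1 hS).2
            exact Nat.pow_le_pow_left (le_of_lt this) t
        _ = #badset * K ^ t := by rw [Finset.sum_const, smul_eq_mul]
        _ ≤ N.choose d * K ^ t := by
            refine Nat.mul_le_mul_right _ ?_
            calc #badset ≤ #(univ.powersetCard d : Finset (Finset (Fin N))) :=
                  card_le_card (filter_subset _ _)
              _ = N.choose d := by rw [Finset.card_powersetCard]; simp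
    -- sum of the penalty terms
    have hpen_sum : ∑ T : Fin t → Fin N, (if Function.Injective T then 0 else N)
        ≤ t * t * N ^ t := by
      have : ∑ T : Fin t → Fin N, (if Function.Injective T then 0 else N)
          = #(univ.filter fun T : Fin t → Fin N => ¬ Function.Injective T) * N := by
        rw [Finset.sum_ite, Finset.sum_const, Finset.sum_const]
        simp
      rw [this]
      calc #(univ.filter fun T : Fin t → Fin N => ¬ Function.Injective T) * N
          ≤ (t * t * N ^ (t-1)) * N := Nat.mul_le_mul_right _ (card_noninj t)
        _ = t * t * (N ^ (t-1) * N) := by ring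
        _ = t * t * N ^ t := by
            congr 1
            rw [← pow_succ]
            congr 1
            omega
    -- total upper bound
    have hSigma : ∑ T : Fin t → Fin N, #(A T) ≤ (u₀ + t * t) * N ^ t := by
      calc ∑ T : Fin t → Fin N, #(A T)
          ≤ ∑ T : Fin t → Fin N, (#(badset.filter (· ⊆ A T)) + (u₀ - 1)
              + (if Function.Injective T then 0 else N)) := Finset.sum_le_sum fun T _ => hup T
        _ = (∑ T : Fin t → Fin N, #(badset.filter (· ⊆ A T)))
            + (u₀ - 1) * N ^ t
            + ∑ T : Fin t → Fin N, (if Function.Injective T then 0 else N) := by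
            rw [Finset.sum_add_distrib, Finset.sum_add_distrib, Finset.sum_const]
            have hcard : #(univ : Finset (Fin t → Fin N)) = N ^ t := by
              rw [Finset.card_univ, Fintype.card_fun]
              simp
            rw [hcard, smul_eq_mul, mul_comm]
        _ ≤ N.choose d * K ^ t + (u₀ - 1) * N ^ t + t * t * N ^ t := by
            gcongr
        _ ≤ N ^ t + (u₀ - 1) * N ^ t + t * t * N ^ t := by gcongr
        _ ≤ (u₀ + t * t) * N ^ t := by
            have h1 : 1 + (u₀ - 1) + t * t = u₀ + t * t := by omega
            have h2 : N ^ t + (u₀ - 1) * N ^ t + t * t * N ^ t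
                = (1 + (u₀ - 1) + t * t) * N ^ t := by ring
            rw [h2, h1]
    -- lower bound via power mean
    have hATup : ∑ T : Fin t → Fin N, #(A T) = ∑ v, (G.degree v) ^ t := by
      rw [hA]; exact sum_card_ATup G t
    obtain ⟨t', rfl⟩ : ∃ t', t = t' + 1 := ⟨t - 1, by omega⟩
    have pm : (∑ v, G.degree v) ^ (t'+1) ≤ N ^ t' * ∑ v, (G.degree v) ^ (t'+1) := by
      have pmR := pow_sum_le_card_mul_sum_pow (s := (univ : Finset (Fin N)))
        (f := fun v => (G.degree v : ℝ)) (fun i _ => Nat.cast_nonneg _) t'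
      have : ((∑ v, G.degree v : ℕ) : ℝ) ^ (t'+1)
          ≤ (N:ℝ) ^ t' * ((∑ v, (G.degree v)^(t'+1) : ℕ) : ℝ) := by
        push_cast
        simpa using pmR
      exact_mod_cast this
    -- combine
    have key1 : N ^ (t'+1) * (N-1) ^ (t'+1) ≤ 2 ^ (t'+1) * (∑ v, G.degree v) ^ (t'+1) := by
      calc N ^ (t'+1) * (N-1) ^ (t'+1) = (N * (N-1)) ^ (t'+1) := by rw [mul_pow]
        _ ≤ (2 * ∑ v, G.degree v) ^ (t'+1) := Nat.pow_le_pow_left hdeg _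
        _ = 2 ^ (t'+1) * (∑ v, G.degree v) ^ (t'+1) := by rw [mul_pow]
    have key2 : N ^ (t'+1) * N ^ (t'+1)
        ≤ N ^ (t'+1) * (N-1) ^ (t'+1) + (t'+1) * (N ^ t' * N ^ (t'+1)) := by
      have := nat_bernoulli N t'
      calc N ^ (t'+1) * N ^ (t'+1)
          ≤ N ^ (t'+1) * ((N-1)^(t'+1) + (t'+1) * N^t') := Nat.mul_le_mul_left _ this
        _ = N ^ (t'+1) * (N-1) ^ (t'+1) + (t'+1) * (N ^ t' * N ^ (t'+1)) := by ring
    have key3 : (∑ v, G.degree v) ^ (t'+1) ≤ N ^ t' * ((u₀ + (t'+1)*(t'+1)) * N ^ (t'+1)) := by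
      calc (∑ v, G.degree v) ^ (t'+1) ≤ N ^ t' * ∑ v, (G.degree v) ^ (t'+1) := pm
        _ = N ^ t' * ∑ T : Fin (t'+1) → Fin N, #(A T) := by rw [hATup]
        _ ≤ N ^ t' * ((u₀ + (t'+1)*(t'+1)) * N ^ (t'+1)) := Nat.mul_le_mul_left _ hSigma
    -- contradiction
    have final : N * (N ^ t' * N ^ (t'+1))
        ≤ (2^(t'+1) * (u₀ + (t'+1)*(t'+1)) + (t'+1)) * (N ^ t' * N ^ (t'+1)) := by
      calc N * (N ^ t' * N ^ (t'+1)) = N ^ (t'+1) * N ^ (t'+1) := by ring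
        _ ≤ N ^ (t'+1) * (N-1) ^ (t'+1) + (t'+1) * (N ^ t' * N ^ (t'+1)) := key2
        _ ≤ 2 ^ (t'+1) * (∑ v, G.degree v) ^ (t'+1) + (t'+1) * (N ^ t' * N ^ (t'+1)) := by
            gcongr
        _ ≤ 2 ^ (t'+1) * (N ^ t' * ((u₀ + (t'+1)*(t'+1)) * N ^ (t'+1)))
            + (t'+1) * (N ^ t' * N ^ (t'+1)) := by gcongr
        _ = (2^(t'+1) * (u₀ + (t'+1)*(t'+1)) + (t'+1)) * (N ^ t' * N ^ (t'+1)) := by ring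
    have hpos : 0 < N ^ t' * N ^ (t'+1) := by positivity
    have hNle : N ≤ 2^(t'+1) * (u₀ + (t'+1)*(t'+1)) + (t'+1) :=
      Nat.le_of_mul_le_mul_right (by calc N * (N ^ t' * N ^ (t'+1)) ≤ _ := final
                                        _ = _ := by ring) hpos
    omega
  -- step 2 : clean up
  obtain ⟨T, hTinj, hTgood⟩ := hex
  set bs := badset.filter (· ⊆ A T) with hbs
  have hne : ∀ S ∈ bs, S.Nonempty := by
    intro S hS
    have h1 : S ∈ badset := (Finset.mem_filter.1 hS).1
    have h2 : #S = d := (Finset.mem_powersetCard.1 (Finset.mem_filter.1 h1).1).2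
    rw [← Finset.card_pos, h2]
    omega
  set R : Finset (Fin N) := bs.attach.image (fun S => S.1.min' (hne S.1 S.2)) with hR
  have hRcard : #R ≤ #bs := le_trans Finset.card_image_le (by rw [Finset.card_attach])
  refine ⟨A T \ R, univ.image T, ?_, ?_, ?_, ?_, ?_⟩
  · rw [Finset.card_image_of_injective _ hTinj]
    simp
  · rw [Finset.disjoint_left]
    intro u hu hu'
    obtain ⟨i, _, rfl⟩ := Finset.mem_image.1 hu'
    have := (Finset.mem_filter.1 (Finset.mem_sdiff.1 hu).1).2 i
    exact G.irrefl this
  · intro u hu v hv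
    obtain ⟨i, _, rfl⟩ := Finset.mem_image.1 hv
    exact (Finset.mem_filter.1 (Finset.mem_sdiff.1 hu).1).2 i
  · have h1 : #(A T) ≤ #(A T \ R) + #R := Finset.card_le_card_sdiff_add_card
    omega
  · intro S hSU hSd
    have hUcard : d ≤ #(A T \ R) := by
      have h1 : #(A T) ≤ #(A T \ R) + #R := Finset.card_le_card_sdiff_add_card
      omega
    obtain ⟨S', hSS', hS'U, hS'card⟩ := Finset.exists_subsuperset_card_eq hSU hSd hUcard
    by_contra hcon
    push_neg at hcon
    have hlt : #(cnbrs G S') < K := by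
      have := Finset.card_le_card (cnbrs_anti G hSS')
      omega
    have hS'bad : S' ∈ bs := by
      rw [hbs, Finset.mem_filter, hbadset, Finset.mem_filter, Finset.mem_powersetCard]
      exact ⟨⟨⟨Finset.subset_univ _, hS'card⟩, hlt⟩, fun x hx => (Finset.mem_sdiff.1 (hS'U hx)).1⟩
    have hmem : S'.min' (hne S' hS'bad) ∈ R := by
      rw [hR]
      exact Finset.mem_image.2 ⟨⟨S', hS'bad⟩, Finset.mem_attach _ _, rfl⟩
    have : S'.min' (hne S' hS'bad) ∈ A T \ R := hS'U (S'.min'_mem _)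
    exact (Finset.mem_sdiff.1 this).2 hmem

set_option maxHeartbeats 1000000 in
lemma embed {V : Type*} [Fintype V] [DecidableEq V] (F : SimpleGraph V) [DecidableRel F.Adj]
    (U Ts : Finset (Fin N)) (d : ℕ)
    (Xs Hi Lo : Finset V)
    (hcover : ∀ v, v ∈ Xs ∨ v ∈ Hi ∨ v ∈ Lo)
    (hXHi : Disjoint Xs Hi) (hXLo : Disjoint Xs Lo) (hHiLo : Disjoint Hi Lo)
    (hXind : ∀ a ∈ Xs, ∀ b ∈ Xs, ¬ F.Adj a b)
    (hYind : ∀ a b, a ∉ Xs → b ∉ Xs → ¬ F.Adj a b)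
    (hLodeg : ∀ y ∈ Lo, F.degree y ≤ d)
    (hdisj : Disjoint U Ts)
    (hUT : ∀ u ∈ U, ∀ v ∈ Ts, G.Adj u v)
    (hUcard : Fintype.card V ≤ #U)
    (hHicard : #Hi ≤ #Ts)
    (hrich : ∀ S ⊆ U, #S ≤ d → Fintype.card V ≤ #(cnbrs G S))
    (hN : 0 < N) :
    ∃ f : V → Fin N, Function.Injective f ∧ ∀ a b, F.Adj a b → G.Adj (f a) (f b) := by
  classical
  -- base embeddings
  have hXU : Fintype.card ↥Xs ≤ Fintype.card ↥U := by
    simp only [Fintype.card_coe]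
    exact le_trans (Finset.card_le_univ Xs) (le_trans (le_of_eq (Finset.card_univ)) hUcard)
  have hHT : Fintype.card ↥Hi ≤ Fintype.card ↥Ts := by
    simp only [Fintype.card_coe]; exact hHicard
  obtain ⟨gX⟩ := Function.Embedding.nonempty_of_card_le hXU
  obtain ⟨gH⟩ := Function.Embedding.nonempty_of_card_le hHT
  set f₀ : V → Fin N := fun v =>
    if hv : v ∈ Xs then (gX ⟨v, hv⟩ : Fin N)
    else if hv' : v ∈ Hi then (gH ⟨v, hv'⟩ : Fin N) else ⟨0, hN⟩ with hf₀
  have hf₀X : ∀ x (hx : x ∈ Xs), f₀ x = (gX ⟨x, hx⟩ : Fin N) := by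
    intro x hx; simp [hf₀, hx]
  have hf₀H : ∀ y (hy : y ∈ Hi), f₀ y = (gH ⟨y, hy⟩ : Fin N) := by
    intro y hy
    have : y ∉ Xs := Finset.disjoint_right.1 hXHi hy
    simp [hf₀, this, hy]
  -- main induction
  have key : ∀ W : Finset V, W ⊆ Lo → ∃ f : V → Fin N,
      (∀ x ∈ Xs, f x ∈ U) ∧ (∀ y ∈ Hi, f y ∈ Ts) ∧
      Set.InjOn f ↑(Xs ∪ Hi ∪ W) ∧
      (∀ a ∈ Xs ∪ Hi ∪ W, ∀ b ∈ Xs ∪ Hi ∪ W, F.Adj a b → G.Adj (f a) (f b)) := by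
    intro W
    induction W using Finset.induction_on with
    | empty =>
      intro _
      refine ⟨f₀, ?_, ?_, ?_, ?_⟩
      · intro x hx; rw [hf₀X x hx]; exact (gX ⟨x, hx⟩).2
      · intro y hy; rw [hf₀H y hy]; exact (gH ⟨y, hy⟩).2
      · intro a ha b hb hab
        simp only [Finset.coe_union, Finset.coe_empty, Set.union_empty, Set.mem_union,
          Finset.mem_coe] at ha hb
        rcases ha with ha | ha <;> rcases hb with hb | hb
        · rw [hf₀X a ha, hf₀X b hb] at hab
          have := gX.injective (Subtype.ext hab)
          exact congrArg Subtype.val this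
        · exfalso
          rw [hf₀X a ha, hf₀H b hb] at hab
          exact Finset.disjoint_left.1 hdisj (by rw [← hab]; exact (gX ⟨a, ha⟩).2) (gH ⟨b, hb⟩).2
        · exfalso
          rw [hf₀H a ha, hf₀X b hb] at hab
          exact Finset.disjoint_left.1 hdisj (by rw [hab]; exact (gX ⟨b, hb⟩).2) (gH ⟨a, ha⟩).2
        · rw [hf₀H a ha, hf₀H b hb] at hab
          have := gH.injective (Subtype.ext hab)
          exact congrArg Subtype.val this
      · intro a ha b hb hab
        simp only [Finset.union_empty, Finset.mem_union] at ha hb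
        rcases ha with ha | ha <;> rcases hb with hb | hb
        · exact absurd hab (hXind a ha b hb)
        · rw [hf₀X a ha, hf₀H b hb]
          exact hUT _ (gX ⟨a, ha⟩).2 _ (gH ⟨b, hb⟩).2
        · rw [hf₀H a ha, hf₀X b hb]
          exact (hUT _ (gX ⟨b, hb⟩).2 _ (gH ⟨a, ha⟩).2).symm
        · exact absurd hab (hYind a b (Finset.disjoint_right.1 hXHi ha)
            (Finset.disjoint_right.1 hXHi hb))
    | @insert y W hyW ih =>
      intro hsub
      have hyLo : y ∈ Lo := hsub (Finset.mem_insert_self y W)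
      have hWLo : W ⊆ Lo := fun w hw => hsub (Finset.mem_insert_of_mem hw)
      obtain ⟨f, hfX, hfH, hfInj, hfAdj⟩ := ih hWLo
      have hyX : y ∉ Xs := Finset.disjoint_right.1 hXLo hyLo
      have hyH : y ∉ Hi := Finset.disjoint_right.1 hHiLo hyLo
      have hyold : y ∉ Xs ∪ Hi ∪ W := by
        simp only [Finset.mem_union]
        push_neg
        exact ⟨⟨hyX, hyH⟩, hyW⟩
      have hney : ∀ c, c ∈ Xs ∪ Hi ∪ W → c ≠ y := by
        rintro c hc rfl; exact hyold hc
      -- the set of images of the neighbors of y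
      have hnbrX : F.neighborFinset y ⊆ Xs := by
        intro b hb
        rw [SimpleGraph.mem_neighborFinset] at hb
        by_contra hbX
        exact hYind y b hyX hbX hb
      set Sy : Finset (Fin N) := (F.neighborFinset y).image f with hSy
      have hSyU : Sy ⊆ U := by
        intro w hw
        obtain ⟨b, hb, rfl⟩ := Finset.mem_image.1 hw
        exact hfX b (hnbrX hb)
      have hSyd : #Sy ≤ d := by
        calc #Sy ≤ #(F.neighborFinset y) := Finset.card_image_le
          _ = F.degree y := (SimpleGraph.card_neighborFinset_eq_degree _ _)
          _ ≤ d := hLodeg y hyLo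
      have hrichy := hrich Sy hSyU hSyd
      -- choose a fresh vertex
      set used : Finset (Fin N) := (Xs ∪ Hi ∪ W).image f with hused
      have husedcard : #used < Fintype.card V := by
        calc #used ≤ #(Xs ∪ Hi ∪ W) := Finset.card_image_le
          _ ≤ #(univ.erase y) := Finset.card_le_card (fun v hv => by
              rw [Finset.mem_erase]
              exact ⟨hney v hv, Finset.mem_univ v⟩)
          _ < Fintype.card V := by
              rw [Finset.card_erase_of_mem (Finset.mem_univ y), Finset.card_univ]
              have : 0 < Fintype.card V := Fintype.card_pos_iff.2 ⟨y⟩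
              omega
      have hfresh : (cnbrs G Sy \ used).Nonempty := by
        rw [← Finset.card_pos]
        have h1 : #(cnbrs G Sy) ≤ #(cnbrs G Sy \ used) + #used :=
          Finset.card_le_card_sdiff_add_card
        omega
      obtain ⟨w, hw⟩ := hfresh
      have hwc : w ∈ cnbrs G Sy := (Finset.mem_sdiff.1 hw).1
      have hwu : w ∉ used := (Finset.mem_sdiff.1 hw).2
      have hupd : ∀ c, c ∈ Xs ∪ Hi ∪ W → Function.update f y w c = f c := by
        intro c hc
        exact Function.update_of_ne (hney c hc) _ _
      have hXsub : ∀ x, x ∈ Xs → x ∈ Xs ∪ Hi ∪ W := by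
        intro x hx; simp [hx]
      have hHsub : ∀ x, x ∈ Hi → x ∈ Xs ∪ Hi ∪ W := by
        intro x hx; simp [hx]
      have hmemsplit : ∀ c, c ∈ Xs ∪ Hi ∪ insert y W → c = y ∨ c ∈ Xs ∪ Hi ∪ W := by
        intro c hc
        simp only [Finset.mem_union, Finset.mem_insert] at hc ⊢
        tauto
      refine ⟨Function.update f y w, ?_, ?_, ?_, ?_⟩
      · intro x hx
        rw [hupd x (hXsub x hx)]
        exact hfX x hx
      · intro z hz
        rw [hupd z (hHsub z hz)]
        exact hfH z hz
      · -- injectivity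
        intro a ha b hb hab
        rw [Finset.mem_coe] at ha hb
        rcases hmemsplit a ha with rfl | ha' <;> rcases hmemsplit b hb with rfl | hb'
        · rfl
        · exfalso
          rw [Function.update_self, hupd b hb'] at hab
          exact hwu (Finset.mem_image.2 ⟨b, hb', hab.symm⟩)
        · exfalso
          rw [Function.update_self, hupd a ha'] at hab
          exact hwu (Finset.mem_image.2 ⟨a, ha', hab⟩)
        · rw [hupd a ha', hupd b hb'] at hab
          exact hfInj (Finset.mem_coe.2 ha') (Finset.mem_coe.2 hb') hab
      · -- adjacency
        intro a ha b hb hab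
        have hyadj : ∀ c, F.Adj y c → G.Adj w (Function.update f y w c) := by
          intro c hc
          have hcX : c ∈ Xs := hnbrX ((SimpleGraph.mem_neighborFinset _ _ _).2 hc)
          rw [hupd c (hXsub c hcX)]
          have hfc : f c ∈ Sy := Finset.mem_image.2 ⟨c, (SimpleGraph.mem_neighborFinset _ _ _).2 hc, rfl⟩
          have := (Finset.mem_filter.1 hwc).2 (f c) hfc
          exact this.symm
        rcases hmemsplit a ha with rfl | ha' <;> rcases hmemsplit b hb with rfl | hb'
        · exact absurd hab (F.irrefl)
        · rw [Function.update_self]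
          exact hyadj b hab
        · rw [Function.update_self]
          exact (hyadj a hab.symm).symm
        · rw [hupd a ha', hupd b hb']
          exact hfAdj a ha' b hb' hab
  obtain ⟨f, _, _, hInj, hAdj⟩ := key Lo Finset.Subset.rfl
  have huniv : Xs ∪ Hi ∪ Lo = Finset.univ := by
    rw [Finset.eq_univ_iff_forall]
    intro v
    simp only [Finset.mem_union]
    rcases hcover v with h | h | h <;> tauto
  refine ⟨f, ?_, ?_⟩
  · rw [huniv, Finset.coe_univ] at hInj
    exact Set.injOn_univ.1 hInj
  · intro a b hab
    exact hAdj a (by rw [huniv]; exact Finset.mem_univ a) b (by rw [huniv]; exact Finset.mem_univ b) hab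

end DRC

/-- host size -/
def Nstar (m : ℕ) : ℕ :=
  4 * m ^ 2 + 4 ^ (m.sqrt + 1) * (2 * m + (m.sqrt + 1) + 4 * (m.sqrt + 1) ^ 2)
    + 2 * (m.sqrt + 1) + 1

lemma main_mem {V : Type*} [Fintype V] (F : SimpleGraph V) (m : ℕ)
    (hm : F.edgeSet.ncard = m) (hbip : F.Colorable 2) (hiso : ∀ v, ∃ w, F.Adj v w)
    (hm1 : 1 ≤ m) : ∀ C : Sym2 (Fin (Nstar m)) → Fin 2, monoCopyIn F C := by
  classical
  set N := Nstar m with hNdef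
  set d := m.sqrt + 1 with hddef
  intro C
  obtain ⟨φ⟩ := hbip
  -- facts about F
  have hedge : #F.edgeFinset = m := by
    rw [SimpleGraph.edgeFinset, ← Set.ncard_eq_toFinset_card']
    exact hm
  have hdeg2m : ∑ v, F.degree v = 2 * m := by
    rw [SimpleGraph.sum_degrees_eq_twice_card_edges, hedge]
  have hdegpos : ∀ v, 1 ≤ F.degree v := by
    intro v
    rw [Nat.one_le_iff_ne_zero, ← Nat.pos_iff_ne_zero]
    exact (SimpleGraph.degree_pos_iff_exists_adj F v).2 (hiso v)
  have hn2m : Fintype.card V ≤ 2 * m := by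
    calc Fintype.card V = ∑ _v : V, 1 := by simp
      _ ≤ ∑ v, F.degree v := Finset.sum_le_sum fun v _ => hdegpos v
      _ = 2 * m := hdeg2m
  -- the color classes
  set Gc : Fin 2 → SimpleGraph (Fin N) :=
    fun c => SimpleGraph.fromRel (fun u v => C s(u, v) = c) with hGc
  have hGcAdj : ∀ (c : Fin 2) (u v : Fin N), (Gc c).Adj u v ↔ u ≠ v ∧ C s(u, v) = c := by
    intro c u v
    rw [hGc]
    simp only [SimpleGraph.fromRel_adj]
    constructor
    · rintro ⟨hne, h | h⟩
      · exact ⟨hne, h⟩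
      · refine ⟨hne, ?_⟩
        rwa [Sym2.eq_swap]
    · rintro ⟨hne, h⟩
      exact ⟨hne, Or.inl h⟩
  -- majority color
  have hNpos : 0 < N := by
    rw [hNdef]
    unfold Nstar
    positivity
  have hdegsplit : ∀ v : Fin N, (Gc 0).degree v + (Gc 1).degree v = N - 1 := by
    intro v
    have h01 : ∀ x : Fin 2, (x = 1) ↔ ¬ (x = 0) := by decide
    have hfil : ∀ c : Fin 2, (Gc c).neighborFinset v
        = (univ.filter (fun u => v ≠ u)).filter (fun u => C s(v, u) = c) := by
      intro c
      rw [SimpleGraph.neighborFinset_eq_filter, Finset.filter_filter]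
      apply Finset.filter_congr
      intro u _
      rw [hGcAdj]
    rw [SimpleGraph.degree, SimpleGraph.degree, hfil 0, hfil 1]
    have h2 : ((univ.filter (fun u : Fin N => v ≠ u)).filter (fun u => C s(v, u) = 1))
        = ((univ.filter (fun u : Fin N => v ≠ u)).filter (fun u => ¬ (C s(v, u) = 0))) := by
      apply Finset.filter_congr
      intro u _
      exact h01 _
    rw [h2, Finset.card_filter_add_card_filter_not]
    have h3 : (univ.filter (fun u : Fin N => v ≠ u)) = univ.erase v := by
      ext u
      simp [eq_comm, Finset.mem_erase, ne_comm]
    rw [h3, Finset.card_erase_of_mem (Finset.mem_univ v), Finset.card_univ, Fintype.card_fin]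
  have hmaj : ∃ c : Fin 2, N * (N - 1) ≤ 2 * ∑ v, (Gc c).degree v := by
    have htot : ∑ v : Fin N, (Gc 0).degree v + ∑ v : Fin N, (Gc 1).degree v = N * (N - 1) := by
      rw [← Finset.sum_add_distrib]
      calc ∑ v : Fin N, ((Gc 0).degree v + (Gc 1).degree v) = ∑ _v : Fin N, (N - 1) :=
            Finset.sum_congr rfl fun v _ => hdegsplit v
        _ = N * (N - 1) := by simp [Finset.sum_const, Finset.card_univ, mul_comm]
    rcases le_total (∑ v, (Gc 0).degree v) (∑ v, (Gc 1).degree v) with h | h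
    · exact ⟨1, by omega⟩
    · exact ⟨0, by omega⟩
  obtain ⟨c, hcdeg⟩ := hmaj
  set G := Gc c with hGdef
  -- apply DRC
  have hmsqrt : m < d ^ 2 := by
    rw [hddef]
    exact Nat.lt_succ_sqrt' m
  have harith_bad : N.choose d * (2 * m) ^ (2 * d) ≤ N ^ (2 * d) := by
    have h4m : (2 * m) ^ 2 ≤ N := by
      have h6 : (2 * m) ^ 2 = 4 * m ^ 2 := by ring
      rw [h6, hNdef]
      unfold Nstar
      omega
    calc N.choose d * (2 * m) ^ (2 * d) = N.choose d * ((2 * m) ^ 2) ^ d := by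
          rw [← pow_mul]
      _ ≤ N ^ d * N ^ d := Nat.mul_le_mul (Nat.choose_le_pow _ _) (Nat.pow_le_pow_left h4m d)
      _ = N ^ (2 * d) := by rw [← pow_add]; congr 1; omega
  have harith_main : 2 ^ (2 * d) * ((2 * m + d) + (2 * d) * (2 * d)) + 2 * d + 1 ≤ N := by
    have h4d : 2 ^ (2 * d) = 4 ^ d := by
      rw [pow_mul]
      norm_num
    rw [h4d, hNdef]
    unfold Nstar
    simp only [← hddef]
    have h5 : (2 * m + d) + (2 * d) * (2 * d) = 2 * m + d + 4 * d ^ 2 := by ring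
    rw [h5]
    omega
  obtain ⟨U, Ts, hTscard, hdisj, hUT, hUcard, hrich⟩ :=
    drc G (d := d) (t := 2 * d) (K := 2 * m) (u₀ := 2 * m + d)
      (by omega) (by omega) (by omega) (by omega) hcdeg harith_bad harith_main
  -- the partition of V
  set Xs : Finset V := univ.filter (fun v => φ v = 0) with hXs
  set Hi : Finset V := univ.filter (fun v => φ v = 1 ∧ d < F.degree v) with hHi
  set Lo : Finset V := univ.filter (fun v => φ v = 1 ∧ F.degree v ≤ d) with hLo
  have hφ2 : ∀ v : V, φ v = 0 ∨ φ v = 1 := by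
    intro v
    have h := (φ v).2
    by_cases h0 : (φ v : Fin 2).val = 0
    · exact Or.inl (Fin.ext h0)
    · exact Or.inr (Fin.ext (by omega))
  have hHicard : #Hi ≤ #Ts := by
    have h1 : (d + 1) * #Hi ≤ 2 * m := by
      calc (d + 1) * #Hi = #Hi * (d + 1) := by ring
        _ ≤ ∑ y ∈ Hi, F.degree y := by
            have := Finset.card_nsmul_le_sum Hi (fun y => F.degree y) (d + 1)
              (fun y hy => (Finset.mem_filter.1 hy).2.2)
            rw [smul_eq_mul] at this
            exact this
        _ ≤ ∑ v, F.degree v := Finset.sum_le_sum_of_subset (Finset.subset_univ Hi)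
        _ = 2 * m := hdeg2m
    have h2 : 2 * m ≤ (d + 1) * (2 * d) := by nlinarith
    have h3 : (d + 1) * #Hi ≤ (d + 1) * (2 * d) := le_trans h1 h2
    have h4 : #Hi ≤ 2 * d := Nat.le_of_mul_le_mul_left h3 (by omega)
    rw [hTscard]
    exact h4
  obtain ⟨f, hfinj, hfadj⟩ := embed G F U Ts d Xs Hi Lo
    (by
      intro v
      rcases hφ2 v with h | h
      · exact Or.inl (Finset.mem_filter.2 ⟨Finset.mem_univ v, h⟩)
      · rcases le_or_gt (F.degree v) d with h' | h'
        · exact Or.inr (Or.inr (Finset.mem_filter.2 ⟨Finset.mem_univ v, h, h'⟩))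
        · exact Or.inr (Or.inl (Finset.mem_filter.2 ⟨Finset.mem_univ v, h, h'⟩)))
    (by
      rw [Finset.disjoint_left]
      intro a ha ha'
      have h0 := (Finset.mem_filter.1 ha).2
      have h1 := (Finset.mem_filter.1 ha').2.1
      rw [h0] at h1
      exact absurd h1 (by decide))
    (by
      rw [Finset.disjoint_left]
      intro a ha ha'
      have h0 := (Finset.mem_filter.1 ha).2
      have h1 := (Finset.mem_filter.1 ha').2.1
      rw [h0] at h1
      exact absurd h1 (by decide))
    (by
      rw [Finset.disjoint_left]
      intro a ha ha'
      have h0 := (Finset.mem_filter.1 ha).2.2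
      have h1 := (Finset.mem_filter.1 ha').2.2
      omega)
    (by
      intro a ha b hb hab
      have h0 := (Finset.mem_filter.1 ha).2
      have h1 := (Finset.mem_filter.1 hb).2
      exact φ.valid hab (by rw [h0, h1]))
    (by
      intro a b ha hb hab
      have h0 : φ a = 1 := (hφ2 a).resolve_left (fun h => ha (Finset.mem_filter.2 ⟨Finset.mem_univ a, h⟩))
      have h1 : φ b = 1 := (hφ2 b).resolve_left (fun h => hb (Finset.mem_filter.2 ⟨Finset.mem_univ b, h⟩))
      exact φ.valid hab (by rw [h0, h1]))
    (fun y hy => (Finset.mem_filter.1 hy).2.2)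
    hdisj hUT
    (by omega)
    hHicard
    (fun S hS hcard => le_trans (by omega) (hrich S hS hcard))
    hNpos
  refine ⟨c, ⟨⟨f, fun {a b} hab => ?_⟩, hfinj⟩⟩
  have h9 := hfadj a b hab
  rw [hGdef, hGc] at h9
  exact h9

-- ### real estimates

lemma le_two_rpow {y : ℝ} (hy : 0 ≤ y) : y ≤ (2:ℝ) ^ y := by
  rw [Real.rpow_def_of_pos (by norm_num : (0:ℝ) < 2)]
  set a := Real.log 2 * y / 2 with ha
  have hlog : (0.6931471803 : ℝ) < Real.log 2 := Real.log_two_gt_d9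
  have ha0 : 0 ≤ a := by positivity
  have h1 : 1 + a ≤ Real.exp a := by linarith [Real.add_one_le_exp a]
  have h2 : Real.exp (Real.log 2 * y) = (Real.exp a) ^ 2 := by
    rw [← Real.exp_nat_mul]
    congr 1
    push_cast
    rw [ha]
    ring
  rw [h2]
  nlinarith [sq_nonneg (1 - a), Real.exp_pos a]

lemma pow5_le_exp {x : ℝ} (hx : 0 ≤ x) : (x / 5) ^ 5 ≤ Real.exp x := by
  have h1 : Real.exp x = (Real.exp (x / 5)) ^ 5 := by
    rw [← Real.exp_nat_mul]
    congr 1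
    push_cast
    ring
  rw [h1]
  have h2 : x / 5 ≤ Real.exp (x / 5) := by
    have := Real.add_one_le_exp (x / 5)
    linarith
  exact pow_le_pow_left₀ (by positivity) h2 5

set_option maxHeartbeats 1000000 in
lemma nstar_le (m : ℕ) (hm : 1 ≤ m) :
    (Nstar m : ℝ) ≤ 90 * m * Real.sqrt m * (2:ℝ) ^ (2 * Real.sqrt (2 * m)) := by
  have hm1 : (1:ℝ) ≤ m := by exact_mod_cast hm
  set s := Real.sqrt m with hs
  have hs0 : 0 ≤ s := Real.sqrt_nonneg _
  have hs2 : s ^ 2 = m := Real.sq_sqrt (by positivity)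
  have hs1 : 1 ≤ s := by
    rw [hs]
    rw [show (1:ℝ) = Real.sqrt 1 by simp]
    exact Real.sqrt_le_sqrt hm1
  have hsm : s ≤ m := by
    nlinarith
  have hd : ((m.sqrt : ℝ) + 1) ≤ s + 1 := by
    have h1 : (m.sqrt : ℝ) ^ 2 ≤ m := by
      exact_mod_cast Nat.sqrt_le' m
    have : (m.sqrt : ℝ) = Real.sqrt ((m.sqrt : ℝ)^2) := (Real.sqrt_sq (by positivity)).symm
    rw [this]
    have := Real.sqrt_le_sqrt h1
    linarith [this]
  set y := 2 * Real.sqrt (2 * m) with hy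
  set E := (2:ℝ) ^ y with hE
  have hsy : s ≤ y := by
    rw [hy, hs]
    have h1 : Real.sqrt m ≤ Real.sqrt (2 * m) := Real.sqrt_le_sqrt (by linarith)
    have h2 : 0 ≤ Real.sqrt (2 * m) := Real.sqrt_nonneg _
    linarith
  have hy0 : 0 ≤ y := le_trans hs0 hsy
  have hsE : s ≤ E := le_trans hsy (le_two_rpow hy0)
  have hE1 : (1:ℝ) ≤ E := by
    rw [hE, show (1:ℝ) = (2:ℝ)^(0:ℝ) by simp]
    exact Real.rpow_le_rpow_of_exponent_le (by norm_num) hy0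
  -- bound on the 4^d factor
  have hfour : ((4 ^ (m.sqrt + 1) : ℕ) : ℝ) ≤ 4 * (2:ℝ) ^ (2 * s) := by
    have h1 : ((4 ^ (m.sqrt + 1) : ℕ) : ℝ) = (2:ℝ) ^ ((2 * (m.sqrt + 1) : ℕ) : ℝ) := by
      rw [Real.rpow_natCast]
      push_cast
      rw [pow_mul]
      norm_num
    rw [h1]
    have h2 : ((2 * (m.sqrt + 1) : ℕ) : ℝ) ≤ 2 * s + 2 := by
      push_cast
      linarith
    calc (2:ℝ) ^ ((2 * (m.sqrt + 1) : ℕ) : ℝ) ≤ (2:ℝ) ^ (2 * s + 2) :=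
          Real.rpow_le_rpow_of_exponent_le (by norm_num) h2
      _ = (2:ℝ) ^ (2 * s) * (2:ℝ) ^ (2:ℝ) := by rw [Real.rpow_add (by norm_num)]
      _ = 4 * (2:ℝ) ^ (2 * s) := by
          rw [show ((2:ℝ) ^ (2:ℝ)) = 4 by
            rw [show (2:ℝ) = ((2:ℕ):ℝ) by norm_num, Real.rpow_natCast]; norm_num]
          ring
  have he1E : (2:ℝ) ^ (2 * s) ≤ E := by
    rw [hE]
    refine Real.rpow_le_rpow_of_exponent_le (by norm_num) ?_
    rw [hy, hs]
    have := Real.sqrt_le_sqrt (show (m:ℝ) ≤ 2*m by linarith)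
    linarith
  have he10 : (0:ℝ) ≤ (2:ℝ) ^ (2 * s) := le_of_lt (Real.rpow_pos_of_pos (by norm_num) _)
  -- bound on the polynomial factor
  have hpoly : ((2 * m + (m.sqrt + 1) + 4 * (m.sqrt + 1) ^ 2 : ℕ) : ℝ) ≤ 20 * m := by
    push_cast
    nlinarith [hd, hs2, hsm, hs1, hm1]
  -- assemble
  have hexpand : (Nstar m : ℝ) = 4 * (m:ℝ)^2
      + ((4 ^ (m.sqrt + 1) : ℕ) : ℝ) * ((2 * m + (m.sqrt + 1) + 4 * (m.sqrt + 1) ^ 2 : ℕ) : ℝ)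
      + (2 * ((m.sqrt : ℝ) + 1) + 1) := by
    unfold Nstar
    push_cast
    ring
  have hBprod : ((4 ^ (m.sqrt + 1) : ℕ) : ℝ) * ((2 * m + (m.sqrt + 1) + 4 * (m.sqrt + 1) ^ 2 : ℕ) : ℝ)
      ≤ (4 * (2:ℝ)^(2*s)) * (20 * m) :=
    mul_le_mul hfour hpoly (by positivity) (by positivity)
  have hms : (m:ℝ)^2 = (m:ℝ) * s * s := by nlinarith [hs2]
  have hmsE0 : 0 ≤ (m:ℝ) * s * E := by positivity
  have t1 : 4 * (m:ℝ)^2 ≤ 4 * ((m:ℝ) * s * E) := by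
    rw [hms]
    have := mul_le_mul_of_nonneg_left hsE (show (0:ℝ) ≤ 4 * m * s by positivity)
    nlinarith
  have t2 : (4 * (2:ℝ)^(2*s)) * (20 * m) ≤ 80 * ((m:ℝ) * s * E) := by
    have h1 : (4 * (2:ℝ)^(2*s)) * (20 * m) = 80 * ((m:ℝ) * (2:ℝ)^(2*s)) := by ring
    rw [h1]
    have h2 : (m:ℝ) * (2:ℝ)^(2*s) ≤ (m:ℝ) * E := by
      apply mul_le_mul_of_nonneg_left he1E (by positivity)
    have h3 : (m:ℝ) * E ≤ (m:ℝ) * s * E := by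
      have : (m:ℝ) * E = (m:ℝ) * 1 * E := by ring
      rw [this]
      have hE0 : (0:ℝ) ≤ E := by positivity
      have := mul_le_mul_of_nonneg_right
        (mul_le_mul_of_nonneg_left hs1 (show (0:ℝ) ≤ m by positivity)) hE0
      linarith
    linarith
  have t3 : 2 * (s + 1) + 1 ≤ 5 * ((m:ℝ) * s * E) := by
    have h1 : 2 * (s + 1) + 1 ≤ 5 * (m:ℝ) := by nlinarith
    have h2 : (1:ℝ) ≤ s * E := by nlinarith
    nlinarith
  have hdge : 2 * ((m.sqrt : ℝ) + 1) + 1 ≤ 2 * (s + 1) + 1 := by linarith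
  calc (Nstar m : ℝ) = _ := hexpand
    _ ≤ 4 * (m:ℝ)^2 + (4 * (2:ℝ)^(2*s)) * (20 * m) + (2 * (s + 1) + 1) := by linarith
    _ ≤ 4 * ((m:ℝ) * s * E) + 80 * ((m:ℝ) * s * E) + 5 * ((m:ℝ) * s * E) := by linarith
    _ = 89 * ((m:ℝ) * s * E) := by ring
    _ ≤ 90 * m * s * E := by nlinarith

lemma ramsey_le_nstar {V : Type*} [Fintype V] (F : SimpleGraph V) (m : ℕ)
    (hm : F.edgeSet.ncard = m) (hbip : F.Colorable 2) (hiso : ∀ v, ∃ w, F.Adj v w)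
    (hm1 : 1 ≤ m) : multiRamsey F 2 ≤ Nstar m :=
  Nat.sInf_le (main_mem F m hm hbip hiso hm1)

lemma ramsey_zero {V : Type*} [Fintype V] (F : SimpleGraph V)
    (hm : F.edgeSet.ncard = 0) (hiso : ∀ v, ∃ w, F.Adj v w) : multiRamsey F 2 = 0 := by
  have hempty : IsEmpty V := by
    constructor
    intro v
    obtain ⟨w, hw⟩ := hiso v
    have h1 : F.edgeSet = ∅ := (Set.ncard_eq_zero (F.edgeSet.toFinite)).1 hm
    have h2 : s(v, w) ∈ F.edgeSet := F.mem_edgeSet.2 hw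
    rw [h1] at h2
    exact h2
  have h0 : (0 : ℕ) ∈ {N | ∀ C : Sym2 (Fin N) → Fin 2, monoCopyIn F C} := by
    intro C
    exact ⟨0, ⟨⟨fun v => isEmptyElim v, fun {a b} hab => isEmptyElim a⟩,
      fun {a b} _ => isEmptyElim a⟩⟩
  exact Nat.le_zero.1 (Nat.sInf_le h0)

lemma sqrt_two_ge : (45/32 : ℝ) ≤ Real.sqrt 2 := by
  nlinarith [Real.sq_sqrt (show (0:ℝ) ≤ 2 by norm_num), Real.sqrt_nonneg 2]

lemma m32_eq (m : ℕ) (hm : 1 ≤ m) : (m:ℝ) ^ ((3:ℝ)/2) = m * Real.sqrt m := by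
  have hm0 : (0:ℝ) < m := by exact_mod_cast hm
  rw [show (3:ℝ)/2 = 1 + 1/2 by norm_num, Real.rpow_add hm0, Real.rpow_one,
    Real.sqrt_eq_rpow]

lemma final_bound (m : ℕ) (hm : 1 ≤ m) :
    (Nstar m : ℝ) ≤ 2^6 * (m : ℝ) ^ ((3:ℝ)/2) * (2:ℝ) ^ (2 * Real.sqrt (2*m) + 1/2) := by
  have h1 := nstar_le m hm
  have h2 : (2:ℝ) ^ (2 * Real.sqrt (2*m) + 1/2)
      = (2:ℝ) ^ (2 * Real.sqrt (2*m)) * Real.sqrt 2 := by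
    rw [Real.rpow_add (by norm_num), ← Real.sqrt_eq_rpow]
  rw [h2, m32_eq m hm]
  have hE0 : (0:ℝ) < (2:ℝ) ^ (2 * Real.sqrt (2*m)) := Real.rpow_pos_of_pos (by norm_num) _
  have hms0 : (0:ℝ) ≤ (m:ℝ) * Real.sqrt m := by positivity
  calc (Nstar m : ℝ) ≤ 90 * m * Real.sqrt m * (2:ℝ) ^ (2 * Real.sqrt (2 * m)) := h1
    _ ≤ (64 * Real.sqrt 2) * ((m:ℝ) * Real.sqrt m) * (2:ℝ) ^ (2 * Real.sqrt (2 * m)) := by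
        have h3 : (90:ℝ) ≤ 64 * Real.sqrt 2 := by nlinarith [sqrt_two_ge]
        nlinarith [hE0, hms0, mul_nonneg hms0 (le_of_lt hE0)]
    _ = 2^6 * ((m:ℝ) * Real.sqrt m) * ((2:ℝ) ^ (2 * Real.sqrt (2*m)) * Real.sqrt 2) := by
        ring

set_option maxHeartbeats 1000000 in
lemma part2_bound (ε : ℝ) (hε : 0 < ε) : ∃ M : ℕ, 1 ≤ M ∧ ∀ m' : ℕ, M ≤ m' →
    (Nstar m' : ℝ) ≤ (2:ℝ) ^ ((1 + ε) * (2 * Real.sqrt (2 * m'))) := by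
  set k := ⌈(24000:ℝ)/ε^5⌉₊ with hk
  refine ⟨k^2 + 1, by omega, ?_⟩
  intro m' hm'
  have hm'1 : 1 ≤ m' := by omega
  have hm'R : (1:ℝ) ≤ m' := by exact_mod_cast hm'1
  set z := Real.sqrt (2 * m') with hz
  have hz0 : 0 ≤ z := Real.sqrt_nonneg _
  have hzsq : z ^ 2 = 2 * m' := Real.sq_sqrt (by positivity)
  set y := 2 * z with hy
  have hy0 : 0 ≤ y := by positivity
  set E := (2:ℝ) ^ y with hE
  have hE0 : (0:ℝ) < E := Real.rpow_pos_of_pos (by norm_num) _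
  -- z is large
  have hz24 : 24000 ≤ ε^5 * z := by
    have h1 : ((k:ℝ))^2 ≤ m' := by
      have : k^2 ≤ m' := by omega
      exact_mod_cast this
    have h2 : (k:ℝ) ≤ Real.sqrt m' := by
      rw [show (k:ℝ) = Real.sqrt ((k:ℝ)^2) from (Real.sqrt_sq (by positivity)).symm]
      exact Real.sqrt_le_sqrt h1
    have h3 : Real.sqrt (m') ≤ z := by
      rw [hz]
      exact Real.sqrt_le_sqrt (by linarith)
    have h4 : (24000:ℝ)/ε^5 ≤ k := Nat.le_ceil _
    have h5 : (24000:ℝ)/ε^5 ≤ z := by linarith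
    have hε5 : (0:ℝ) < ε^5 := by positivity
    calc (24000:ℝ) = ε^5 * ((24000:ℝ)/ε^5) := by field_simp
      _ ≤ ε^5 * z := by
          exact mul_le_mul_of_nonneg_left h5 (le_of_lt hε5)
  -- key exponential bound
  have hkey : 90 * (m':ℝ)^2 ≤ (2:ℝ) ^ (ε * y) := by
    have hεy : (2:ℝ) ^ (ε * y) = Real.exp (Real.log 2 * (ε * y)) :=
      Real.rpow_def_of_pos (by norm_num) _
    set x := Real.log 2 * (ε * y) with hx
    have hlog : (0.6931471803 : ℝ) < Real.log 2 := Real.log_two_gt_d9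
    have hx0 : 0 ≤ x := by
      rw [hx]
      have : 0 ≤ ε * y := by positivity
      nlinarith
    have h6 := pow5_le_exp hx0
    have h7 : ε * z / 4 ≤ x / 5 := by
      rw [hx, hy]
      nlinarith [mul_nonneg (le_of_lt hε) hz0]
    have h8 : (ε * z / 4)^5 ≤ (x/5)^5 := by
      apply pow_le_pow_left₀ (by positivity) h7
    have h9 : 90 * (m':ℝ)^2 ≤ (ε * z / 4)^5 := by
      have hm'z : (m':ℝ) = z^2/2 := by linarith [hzsq]
      rw [hm'z]
      have hexp : (ε * z / 4)^5 = (ε^5 * z) * z^4 / 1024 := by ring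
      rw [hexp]
      nlinarith [hz24, pow_nonneg hz0 4]
    rw [hεy]
    linarith
  -- assemble
  have h10 := nstar_le m' hm'1
  have h11 : Real.sqrt m' ≤ m' := by
    calc Real.sqrt m' ≤ Real.sqrt ((m':ℝ)^2) := Real.sqrt_le_sqrt (by nlinarith)
      _ = m' := Real.sqrt_sq (by positivity)
  calc (Nstar m' : ℝ) ≤ 90 * m' * Real.sqrt m' * E := h10
    _ ≤ 90 * (m':ℝ)^2 * E := by
        have : 90 * (m':ℝ) * Real.sqrt m' ≤ 90 * (m':ℝ)^2 := by nlinarith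
        nlinarith [hE0]
    _ ≤ (2:ℝ) ^ (ε * y) * E := by nlinarith [hE0, hkey]
    _ = (2:ℝ) ^ ((1 + ε) * y) := by
        rw [hE, ← Real.rpow_add (by norm_num)]
        congr 1
        ring


/-- **Corollary.** Let `F` be a bipartite graph with `m` edges and no
isolated vertices. Then `r_2(F) ≤ 2^6 · m^{3/2} · 2^{2√(2m) + 1/2}`; in particular,
`r_2(F) ≤ 2^{(1+o(1))·2√(2m)}` as `m → ∞`: for every `ε > 0` there is `M` such that every
bipartite graph `F` with `m ≥ M` edges and no isolated vertices has
`r_2(F) ≤ 2^{(1+ε)·2√(2m)}`. -/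
theorem twoColorRamsey_le_bipartite {V : Type*} [Fintype V] (F : SimpleGraph V)
    (m : ℕ) (hm : F.edgeSet.ncard = m)
    (hbip : F.Colorable 2) (hiso : ∀ v : V, ∃ w, F.Adj v w) :
    (multiRamsey F 2 : ℝ) ≤
        2 ^ 6 * (m : ℝ) ^ ((3 : ℝ) / 2) * (2 : ℝ) ^ (2 * Real.sqrt (2 * m) + 1 / 2) ∧
      ∀ ε : ℝ, 0 < ε → ∃ M : ℕ, ∀ m' : ℕ, M ≤ m' →
        ∀ (n : ℕ) (F' : SimpleGraph (Fin n)), F'.edgeSet.ncard = m' →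
          F'.Colorable 2 → (∀ v, ∃ w, F'.Adj v w) →
          (multiRamsey F' 2 : ℝ) ≤ (2 : ℝ) ^ ((1 + ε) * (2 * Real.sqrt (2 * m'))) := by
  constructor
  · -- part 1
    rcases Nat.eq_zero_or_pos m with rfl | hm1
    · rw [ramsey_zero F hm hiso]
      have : ((0:ℕ):ℝ) ^ ((3:ℝ)/2) = 0 := by
        rw [Nat.cast_zero]
        exact Real.zero_rpow (by norm_num)
      rw [this]
      simp
    · calc (multiRamsey F 2 : ℝ) ≤ (Nstar m : ℝ) := by
            exact_mod_cast ramsey_le_nstar F m hm hbip hiso hm1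
        _ ≤ 2 ^ 6 * (m : ℝ) ^ ((3:ℝ)/2) * (2:ℝ) ^ (2 * Real.sqrt (2*m) + 1/2) :=
            final_bound m hm1
  · -- part 2
    intro ε hε
    obtain ⟨M, hM1, hM⟩ := part2_bound ε hε
    refine ⟨M, ?_⟩
    intro m' hm' n F' hm'' hbip' hiso'
    calc (multiRamsey F' 2 : ℝ) ≤ (Nstar m' : ℝ) := by
          exact_mod_cast ramsey_le_nstar F' m' hm'' hbip' hiso' (le_trans hM1 hm')
      _ ≤ (2:ℝ) ^ ((1 + ε) * (2 * Real.sqrt (2 * m'))) := hM m' hm'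
end

section
/- (Dependent Random Choice) If ε > 0 and G = (V₁, V₂; E) is a bipartite graph with |V₁| = |V₂| = N and at least εN² edges, then for all positive integers a, d, t, x, there is a subset A ⊆ V₂ with |A| ≥ 2^{-1/a} ε^t N such that for all but at most 2 ε^{-ta} (x/N)^t (|A|/N)^a · C(N, d) of the d-element subsets S of A, the common neighborhood of S in V₁ has size at least x. -/
open Finset

private lemma count_tuples {N t : ℕ} (B : Finset (Fin N)) :
    (Finset.univ.filter fun f : Fin t → Fin N => ∀ i, f i ∈ B).card = B.card ^ t := by
  classical
  have h : (Finset.univ.filter fun f : Fin t → Fin N => ∀ i, f i ∈ B)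
      = Fintype.piFinset (fun _ : Fin t => B) := by
    ext f; simp [Fintype.mem_piFinset]
  rw [h, Fintype.card_piFinset]
  simp

/-- **Dependent Random Choice.** Let `G = (V₁, V₂; E)` be a bipartite graph
with both parts of size `N` (modeled by the relation `r`, where `r u v` means that
`u ∈ V₁` is joined to `v ∈ V₂`) having at least `ε N²` edges, `ε > 0`. Then for all
positive integers `a, d, t, x` there is a subset `A ⊆ V₂` with `|A| ≥ 2^{-1/a} ε^t N`
such that for all but at most `2 ε^{-ta} (x/N)^t (|A|/N)^a · C(N,d)` of the `d`-element
subsets `S` of `A`, the common neighborhood `N(S) ⊆ V₁` of `S` has size at least `x`. -/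
theorem dependent_random_choice (N : ℕ) (r : Fin N → Fin N → Prop)
    [DecidableRel r] (ε : ℝ) (hε : 0 < ε)
    (hE : ε * N ^ 2 ≤ ((Finset.univ.filter fun p : Fin N × Fin N => r p.1 p.2).card : ℝ))
    (a d t x : ℕ) (ha : 0 < a) (hd : 0 < d) (ht : 0 < t) (hx : 0 < x) :
    ∃ A : Finset (Fin N),
      (2 : ℝ) ^ (-(1 : ℝ) / a) * ε ^ t * N ≤ (A.card : ℝ) ∧
      (((A.powersetCard d).filter fun S =>
          (Finset.univ.filter fun u : Fin N => ∀ v ∈ S, r u v).card < x).card : ℝ) ≤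
        2 * ε ^ (-(t * a : ℤ)) * ((x : ℝ) / N) ^ t * ((A.card : ℝ) / N) ^ a
          * (N.choose d) := by
  classical
  rcases Nat.eq_zero_or_pos N with hN0 | hN0
  · subst hN0
    refine ⟨∅, by simp, ?_⟩
    have h1 : ((∅ : Finset (Fin 0)).powersetCard d) = ∅ := by
      rw [Finset.powersetCard_eq_empty]; simpa using hd
    rw [h1]
    simp [div_zero, zero_pow ht.ne']
  -- main case
  have hNR : (0 : ℝ) < N := by exact_mod_cast hN0
  -- definitions
  set Adj : (Fin t → Fin N) → Finset (Fin N) :=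
    fun f => Finset.univ.filter (fun v => ∀ i, r (f i) v) with hAdj
  set deg : Fin N → ℕ := fun v => (Finset.univ.filter fun u => r u v).card with hdeg
  set ns : Finset (Fin N) → ℕ :=
    fun S => (Finset.univ.filter fun u : Fin N => ∀ v ∈ S, r u v).card with hns
  set Y : (Fin t → Fin N) → ℕ :=
    fun f => (((Adj f).powersetCard d).filter fun S => ns S < x).card with hY
  set K : ℕ := N.choose d with hK
  -- edge count equals sum of degrees
  have hedge : (Finset.univ.filter fun p : Fin N × Fin N => r p.1 p.2).card
      = ∑ v : Fin N, deg v := by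
    rw [Finset.card_filter, ← Finset.univ_product_univ, Finset.sum_product_right]
    refine Finset.sum_congr rfl fun v _ => ?_
    simp only [hdeg, Finset.card_filter]
  -- sum over tuples of |Adj f| equals sum of deg^t
  have hsumAdj : ∑ f : Fin t → Fin N, (Adj f).card = ∑ v : Fin N, (deg v) ^ t := by
    have h1 : ∀ f, (Adj f).card = ∑ v : Fin N, if ∀ i, r (f i) v then 1 else 0 := by
      intro f; rw [hAdj, Finset.card_filter]
    simp_rw [h1]
    rw [Finset.sum_comm]
    refine Finset.sum_congr rfl fun v _ => ?_
    have h2 : deg v ^ t = (Finset.univ.filter fun f : Fin t → Fin N =>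
        ∀ i, f i ∈ (Finset.univ.filter fun u => r u v)).card := by
      rw [count_tuples]
    rw [h2, Finset.card_filter]
    refine Finset.sum_congr rfl fun f _ => ?_
    simp
  -- lower bound on sum of |Adj f| (in ℝ)
  have hsumAdjR : ε ^ t * (N : ℝ) ^ (t + 1) ≤ ∑ f : Fin t → Fin N, ((Adj f).card : ℝ) := by
    have hcast : ∑ f : Fin t → Fin N, ((Adj f).card : ℝ) = ∑ v : Fin N, ((deg v : ℝ)) ^ t := by
      exact_mod_cast congrArg (Nat.cast : ℕ → ℝ) hsumAdj
    rw [hcast]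
    obtain ⟨t', rfl⟩ : ∃ t', t = t' + 1 := ⟨t - 1, (Nat.succ_pred_eq_of_pos ht).symm⟩
    have hj := pow_sum_div_card_le_sum_pow (s := Finset.univ)
      (f := fun v : Fin N => (deg v : ℝ)) (fun i _ => by positivity) t'
    refine le_trans ?_ hj
    rw [Finset.card_univ, Fintype.card_fin]
    rw [le_div_iff₀ (by positivity)]
    have hdsum : ε * N ^ 2 ≤ ∑ v : Fin N, (deg v : ℝ) := by
      rw [hedge] at hE; exact_mod_cast hE
    calc ε ^ (t' + 1) * (N : ℝ) ^ (t' + 1 + 1) * (N : ℝ) ^ t'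
        = (ε * (N : ℝ) ^ 2) ^ (t' + 1) := by ring
      _ ≤ (∑ v : Fin N, (deg v : ℝ)) ^ (t' + 1) :=
          pow_le_pow_left₀ (by positivity) hdsum _
  -- Jensen over tuples: lower bound on sum of |Adj f|^a
  have hsumX : ε ^ (t * a) * (N : ℝ) ^ (a + t)
      ≤ ∑ f : Fin t → Fin N, ((Adj f).card : ℝ) ^ a := by
    obtain ⟨a', rfl⟩ : ∃ a', a = a' + 1 := ⟨a - 1, (Nat.succ_pred_eq_of_pos ha).symm⟩
    have hj := pow_sum_div_card_le_sum_pow (s := (Finset.univ : Finset (Fin t → Fin N)))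
      (f := fun f => ((Adj f).card : ℝ)) (fun i _ => by positivity) a'
    refine le_trans ?_ hj
    rw [Finset.card_univ, Fintype.card_fun, Fintype.card_fin, Fintype.card_fin]
    rw [le_div_iff₀ (by positivity)]
    have h2 : (ε ^ t * (N : ℝ) ^ (t + 1)) ^ (a' + 1)
        ≤ (∑ f : Fin t → Fin N, ((Adj f).card : ℝ)) ^ (a' + 1) :=
      pow_le_pow_left₀ (by positivity) hsumAdjR _
    refine le_trans (le_of_eq ?_) h2
    push_cast
    ring
  -- upper bound on sum of Y f
  have hsumY : ∑ f : Fin t → Fin N, Y f ≤ K * x ^ t := by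
    have h1 : ∀ f, Y f = ∑ S ∈ Finset.univ.powersetCard d,
        if ns S < x ∧ S ⊆ Adj f then 1 else 0 := by
      intro f
      simp only [hY]
      rw [show (((Adj f).powersetCard d).filter fun S => ns S < x)
          = (Finset.univ.powersetCard d).filter (fun S => ns S < x ∧ S ⊆ Adj f) from ?_]
      · rw [Finset.card_filter]
      · ext S
        simp only [Finset.mem_filter, Finset.mem_powersetCard, Finset.subset_univ,
          true_and]
        tauto
    simp_rw [h1]
    rw [Finset.sum_comm]
    have h2 : ∀ S ∈ Finset.univ.powersetCard d,
        (∑ f : Fin t → Fin N, if ns S < x ∧ S ⊆ Adj f then 1 else 0) ≤ x ^ t := by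
      intro S _
      by_cases hb : ns S < x
      · have h3 : (∑ f : Fin t → Fin N, if ns S < x ∧ S ⊆ Adj f then 1 else 0)
            = (Finset.univ.filter fun f : Fin t → Fin N =>
                ∀ i, f i ∈ (Finset.univ.filter fun u : Fin N => ∀ v ∈ S, r u v)).card := by
          rw [Finset.card_filter]
          refine Finset.sum_congr rfl fun f _ => ?_
          congr 1
          simp only [eq_iff_iff, Finset.mem_filter, Finset.mem_univ, true_and]
          constructor
          · rintro ⟨-, hsub⟩ i v hv
            have := hsub hv
            rw [hAdj] at this
            simp only [Finset.mem_filter, Finset.mem_univ, true_and] at this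
            exact this i
          · intro h
            refine ⟨hb, fun v hv => ?_⟩
            rw [hAdj]
            simp only [Finset.mem_filter, Finset.mem_univ, true_and]
            exact fun i => h i v hv
        rw [h3, count_tuples]
        have : ns S ≤ x := hb.le
        calc (ns S) ^ t ≤ x ^ t := Nat.pow_le_pow_left this t
          _ = x ^ t := rfl
      · simp only [hb, false_and, if_false, Finset.sum_const_zero]
        positivity
    calc ∑ S ∈ Finset.univ.powersetCard d,
          (∑ f : Fin t → Fin N, if ns S < x ∧ S ⊆ Adj f then 1 else 0)
        ≤ ∑ S ∈ Finset.univ.powersetCard d, x ^ t := Finset.sum_le_sum h2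
      _ = K * x ^ t := by
          rw [Finset.sum_const, Finset.card_powersetCard, Finset.card_univ, Fintype.card_fin,
            smul_eq_mul]
  -- basic facts
  haveI : Nonempty (Fin N) := ⟨⟨0, hN0⟩⟩
  have hne : (Finset.univ : Finset (Fin t → Fin N)).Nonempty := Finset.univ_nonempty
  have hcardF : (Finset.univ : Finset (Fin t → Fin N)).card = N ^ t := by
    rw [Finset.card_univ, Fintype.card_fun, Fintype.card_fin, Fintype.card_fin]
  have haR : (a : ℝ) ≠ 0 := by exact_mod_cast ha.ne'
  have h2a : ((2:ℝ) ^ (-(1:ℝ)/a)) ^ a = 1/2 := by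
    rw [← Real.rpow_natCast ((2:ℝ) ^ (-(1:ℝ)/a)) a,
      ← Real.rpow_mul (by norm_num : (0:ℝ) ≤ 2), div_mul_cancel₀ _ haR]
    norm_num [Real.rpow_neg_one]
  have hroot : ∀ A : Finset (Fin N),
      ε ^ (t * a) * (N : ℝ) ^ a / 2 ≤ ((A.card : ℝ)) ^ a →
      (2:ℝ) ^ (-(1:ℝ)/a) * ε ^ t * (N:ℝ) ≤ (A.card : ℝ) := by
    intro A hA
    refine le_of_pow_le_pow_left₀ ha.ne' (Nat.cast_nonneg _) ?_
    calc ((2:ℝ)^(-(1:ℝ)/a) * ε^t * N)^a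
        = ((2:ℝ)^(-(1:ℝ)/a))^a * (ε^t)^a * (N:ℝ)^a := by ring
      _ = ε ^ (t*a) * (N:ℝ)^a / 2 := by rw [h2a, ← pow_mul]; ring
      _ ≤ _ := hA
  rcases Nat.eq_zero_or_pos K with hK0 | hK0
  · -- degenerate case : d > N, no d-subsets at all
    have hd' : N < d := by
      rw [hK] at hK0; exact Nat.choose_eq_zero_iff.mp hK0
    have hex : ∃ f : Fin t → Fin N, ε ^ (t*a) * (N:ℝ)^a ≤ ((Adj f).card : ℝ)^a := by
      by_contra hcon
      push_neg at hcon
      have hlt : ∑ f : Fin t → Fin N, ((Adj f).card:ℝ)^a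
          < ∑ _f : Fin t → Fin N, ε^(t*a) * (N:ℝ)^a :=
        Finset.sum_lt_sum_of_nonempty hne fun f _ => hcon f
      rw [Finset.sum_const, hcardF, nsmul_eq_mul] at hlt
      have h2 : ((N:ℝ)^t : ℝ) * (ε^(t*a) * (N:ℝ)^a) = ε^(t*a) * (N:ℝ)^(a+t) := by
        push_cast; ring
      push_cast at hlt
      nlinarith [hsumX]
    obtain ⟨f, hf⟩ := hex
    refine ⟨Adj f, hroot _ (le_trans (by nlinarith [pow_pos hε (t*a), pow_pos hNR a]) hf), ?_⟩
    have hemp : (Adj f).powersetCard d = ∅ := by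
      rw [Finset.powersetCard_eq_empty]
      exact lt_of_le_of_lt (le_trans (Finset.card_le_univ _) (by simp)) hd'
    rw [hemp]
    have hKR : ((N.choose d : ℕ) : ℝ) = 0 := by exact_mod_cast hK0
    rw [hKR]
    simp
  · -- main case
    have hKR : (0:ℝ) < (K:ℝ) := by exact_mod_cast hK0
    have hxR : (0:ℝ) < (x:ℝ) := by exact_mod_cast hx
    set c : ℝ := ε ^ (t*a) * (N:ℝ)^(a+t) / (2 * (x:ℝ)^t * (K:ℝ)) with hc
    have hcpos : 0 < c := by rw [hc]; positivity
    have hkey : ∃ f : Fin t → Fin N,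
        ε^(t*a) * (N:ℝ)^a / 2 ≤ ((Adj f).card:ℝ)^a - c * (Y f : ℝ) := by
      by_contra hcon
      push_neg at hcon
      have hlt : ∑ f : Fin t → Fin N, (((Adj f).card:ℝ)^a - c * (Y f : ℝ))
          < ∑ _f : Fin t → Fin N, (ε^(t*a) * (N:ℝ)^a / 2) :=
        Finset.sum_lt_sum_of_nonempty hne fun f _ => hcon f
      rw [Finset.sum_const, hcardF, nsmul_eq_mul, Finset.sum_sub_distrib,
        ← Finset.mul_sum] at hlt
      have hYR : (∑ f : Fin t → Fin N, (Y f : ℝ)) ≤ (K:ℝ) * (x:ℝ) ^ t := by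
        exact_mod_cast hsumY
      have hcK : c * ((K:ℝ) * (x:ℝ)^t) = ε^(t*a)*(N:ℝ)^(a+t)/2 := by
        rw [hc]; field_simp
      have hcY : c * (∑ f : Fin t → Fin N, (Y f : ℝ)) ≤ ε^(t*a)*(N:ℝ)^(a+t)/2 := by
        rw [← hcK]; exact mul_le_mul_of_nonneg_left hYR hcpos.le
      have h2 : ((N:ℝ)^t : ℝ) * (ε^(t*a) * (N:ℝ)^a / 2) = ε^(t*a) * (N:ℝ)^(a+t) / 2 := by
        push_cast; ring
      push_cast at hlt
      nlinarith [hsumX]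
    obtain ⟨f, hf⟩ := hkey
    have hcYnn : (0:ℝ) ≤ c * (Y f : ℝ) := by positivity
    refine ⟨Adj f, hroot _ (by linarith), ?_⟩
    show (Y f : ℝ) ≤ 2 * ε ^ (-(t * a : ℤ)) * ((x : ℝ) / N) ^ t
      * (((Adj f).card : ℝ) / N) ^ a * (N.choose d)
    have hRHSeq : 2 * ε ^ (-(t * a : ℤ)) * ((x : ℝ) / N) ^ t
        * (((Adj f).card : ℝ) / N) ^ a * ((N.choose d : ℕ) : ℝ)
        = ((Adj f).card:ℝ)^a / c := by
      rw [show ε ^ (-(t * a : ℤ)) = (ε ^ (t*a))⁻¹ by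
        rw [← zpow_natCast ε (t*a), ← zpow_neg]; push_cast; ring_nf]
      rw [hc, ← hK]
      field_simp
      have key1 : (N:ℝ)^t * ((N:ℝ)⁻¹)^t = 1 := by rw [← mul_pow, mul_inv_cancel₀ hNR.ne', one_pow]
      have key2 : (N:ℝ)^a * ((N:ℝ)⁻¹)^a = 1 := by rw [← mul_pow, mul_inv_cancel₀ hNR.ne', one_pow]
      linear_combination ((x:ℝ)^t * ((Adj f).card:ℝ)^a * (N:ℝ)^a * ((N:ℝ)⁻¹)^a) * key1
        + ((x:ℝ)^t * ((Adj f).card:ℝ)^a) * key2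
    rw [hRHSeq, le_div_iff₀ hcpos, mul_comm]
    have hhalf : 0 < ε ^ (t*a) * (N:ℝ)^a / 2 := by positivity
    linarith
end

section
/- Suppose G is a graph with vertex set V₁, and V₁ ⊇ V₂ ⊇ … ⊇ V_q is a nested family of subsets such that |V_q| ≥ x ≥ 4n, and for each 1 ≤ i < q, all but fewer than (2d)^{-d} · C(x, d) of the d-element subsets U ⊆ V_{i+1} satisfy |N(U) ∩ V_i| ≥ x. Then for every q-partite graph H with n vertices and maximum degree at most d, there are at least (x/4)^n labeled copies of H in G. -/
open Finset

namespace FS42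

variable {α : Type*} [DecidableEq α] (G : SimpleGraph α) [DecidableRel G.Adj]
  {q' : ℕ} (Vs : Fin (q' + 1) → Finset α) (x d : ℕ)

def badSets (i : Fin q') : Finset (Finset α) :=
  ((Vs i.succ).powersetCard d).filter fun U =>
    ((Vs i.castSucc).filter fun w => ∀ u ∈ U, G.Adj u w).card < x

def Dang (i : Fin q') (W : Finset α) : Prop :=
  Nat.choose (x - W.card) (d - W.card) ≤
    ((badSets G Vs x d i).filter fun B => W ⊆ B).card * (2 * d) ^ (d - W.card)

instance instDecDang (i : Fin q') (W : Finset α) : Decidable (Dang G Vs x d i W) := by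
  unfold Dang; infer_instance

def DangC (j : Fin (q' + 1)) (W : Finset α) : Prop :=
  ∃ i : Fin q', i.castSucc = j ∧ Dang G Vs x d i W

instance instDecDangC (j : Fin (q' + 1)) (W : Finset α) : Decidable (DangC G Vs x d j W) := by
  unfold DangC; infer_instance

variable {G Vs x d}

lemma x_ge_d {i : Fin q'}
    (hsi : ((badSets G Vs x d i).card : ℝ) < (2 * (d : ℝ)) ^ (-(d : ℤ)) * (x.choose d)) :
    d ≤ x := by
  by_contra h
  rw [Nat.choose_eq_zero_of_lt (by omega)] at hsi
  simp at hsi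
  have h0 : (0:ℝ) ≤ ((badSets G Vs x d i).card : ℝ) := by positivity
  linarith

lemma notDang_empty {i : Fin q'}
    (hsi : ((badSets G Vs x d i).card : ℝ) < (2 * (d : ℝ)) ^ (-(d : ℤ)) * (x.choose d)) :
    ¬ Dang G Vs x d i ∅ := by
  intro hD
  rw [Dang, card_empty, Nat.sub_zero, Nat.sub_zero,
    filter_true_of_mem (fun _ _ => empty_subset _)] at hD
  rcases Nat.eq_zero_or_pos d with hd | hd
  · subst hd
    simp only [Nat.cast_zero, mul_zero, neg_zero, zpow_zero, one_mul, Nat.choose_zero_right,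
      Nat.cast_one] at hsi
    simp only [pow_zero, mul_one, Nat.choose_zero_right] at hD
    have : (badSets G Vs x 0 i).card = 0 := by exact_mod_cast Nat.lt_one_iff.mp (by exact_mod_cast hsi)
    omega
  · have h2d : (0:ℝ) < (2 * (d:ℝ)) := by positivity
    have hzp : (2 * (d : ℝ)) ^ (-(d : ℤ)) = ((2 * (d:ℝ)) ^ d)⁻¹ := by
      rw [zpow_neg, zpow_natCast]
    have hcast : ((x.choose d : ℝ)) ≤ ((badSets G Vs x d i).card : ℝ) * (2 * (d:ℝ)) ^ d := by
      calc ((x.choose d : ℝ)) ≤ (((badSets G Vs x d i).card * (2 * d) ^ d : ℕ) : ℝ) := by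
            exact_mod_cast hD
        _ = ((badSets G Vs x d i).card : ℝ) * (2 * (d:ℝ)) ^ d := by push_cast; ring
    rw [hzp] at hsi
    have hpow : (0:ℝ) < (2 * (d:ℝ)) ^ d := by positivity
    rw [← div_eq_inv_mul, lt_div_iff₀ hpow] at hsi
    linarith

set_option maxHeartbeats 1000000 in
/-- number of `d`-supersets of `W` inside `s` is at least `C(|s| - |W|, d - |W|)`. -/
lemma card_supersets_ge {s W : Finset α} (hWs : W ⊆ s) (hWd : W.card ≤ d) :
    Nat.choose (s.card - W.card) (d - W.card) ≤
      ((s.powersetCard d).filter fun B => W ⊆ B).card := by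
  rw [← Finset.card_sdiff_of_subset hWs, ← Finset.card_powersetCard]
  apply Finset.card_le_card_of_injOn (fun U => U ∪ W)
  · intro U hU
    rw [Finset.mem_coe, mem_powersetCard] at hU
    obtain ⟨hU1, hU2⟩ := hU
    have hdisj : Disjoint U W := Finset.disjoint_left.mpr fun a ha =>
      (Finset.mem_sdiff.mp (hU1 ha)).2
    rw [Finset.mem_coe, mem_filter, mem_powersetCard]
    refine ⟨⟨Finset.union_subset (hU1.trans (Finset.sdiff_subset)) hWs, ?_⟩,
      Finset.subset_union_right⟩
    rw [Finset.card_union_of_disjoint hdisj, hU2]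
    omega
  · intro U hU U' hU' heq
    rw [Finset.mem_coe, mem_powersetCard] at hU hU'
    have h1 : Disjoint U W := Finset.disjoint_left.mpr fun a ha =>
      (Finset.mem_sdiff.mp (hU.1 ha)).2
    have h2 : Disjoint U' W := Finset.disjoint_left.mpr fun a ha =>
      (Finset.mem_sdiff.mp (hU'.1 ha)).2
    have : (U ∪ W) \ W = (U' ∪ W) \ W := by
      have heq' : U ∪ W = U' ∪ W := heq
      rw [heq']
    rwa [Finset.union_sdiff_right, Finset.union_sdiff_right,
      Finset.sdiff_eq_self_of_disjoint h1, Finset.sdiff_eq_self_of_disjoint h2] at this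


lemma notDang_lt {i : Fin q'} {W : Finset α} (hW : ¬ Dang G Vs x d i W) :
    ((badSets G Vs x d i).filter fun B => W ⊆ B).card * (2 * d) ^ (d - W.card) <
      Nat.choose (x - W.card) (d - W.card) := Nat.lt_of_not_le fun h => hW h

/-- L3 : a non-dangerous set has many common neighbors in `Vs i.castSucc`. -/
lemma card_common_nbrs {i : Fin q'}
    (hsi : ((badSets G Vs x d i).card : ℝ) < (2 * (d : ℝ)) ^ (-(d : ℤ)) * (x.choose d))
    (hVsucc : x ≤ (Vs i.succ).card) {W : Finset α} (hWsub : W ⊆ Vs i.succ)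
    (hWd : W.card ≤ d) (hW : ¬ Dang G Vs x d i W) :
    x ≤ ((Vs i.castSucc).filter fun w => ∀ u ∈ W, G.Adj u w).card := by
  have hxd : d ≤ x := x_ge_d hsi
  have hlt := notDang_lt hW
  have hpow : 0 < (2 * d) ^ (d - W.card) := by
    rcases Nat.eq_zero_or_pos d with hd | hd
    · have : d - W.card = 0 := by omega
      rw [this, pow_zero]; norm_num
    · exact Nat.pow_pos (by omega)
  have h1 : ((badSets G Vs x d i).filter fun B => W ⊆ B).card <
      Nat.choose (x - W.card) (d - W.card) := by
    calc ((badSets G Vs x d i).filter fun B => W ⊆ B).card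
        ≤ ((badSets G Vs x d i).filter fun B => W ⊆ B).card * (2 * d) ^ (d - W.card) :=
          Nat.le_mul_of_pos_right _ hpow
      _ < _ := hlt
  have h2 : Nat.choose (x - W.card) (d - W.card) ≤
      Nat.choose ((Vs i.succ).card - W.card) (d - W.card) :=
    Nat.choose_le_choose _ (by omega)
  have h3 := card_supersets_ge (d := d) hWsub hWd
  -- there exists a good superset
  obtain ⟨B, hBmem, hBgood⟩ : ∃ B ∈ ((Vs i.succ).powersetCard d).filter fun B => W ⊆ B,
      B ∉ badSets G Vs x d i := by
    by_contra hcon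
    push_neg at hcon
    have hsub : ((Vs i.succ).powersetCard d).filter (fun B => W ⊆ B) ⊆
        (badSets G Vs x d i).filter fun B => W ⊆ B := by
      intro B hB
      rw [mem_filter]
      exact ⟨hcon B hB, (mem_filter.mp hB).2⟩
    have := Finset.card_le_card hsub
    omega
  rw [mem_filter] at hBmem
  obtain ⟨hBpc, hWB⟩ := hBmem
  rw [badSets, mem_filter, not_and, not_lt] at hBgood
  refine le_trans (hBgood hBpc) (Finset.card_le_card ?_)
  apply Finset.monotone_filter_right
  intro w _ hw u hu
  exact hw u (hWB hu)

/-- double counting -/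
lemma sum_insert_count {i : Fin q'} {W : Finset α} (hWsub : W ⊆ Vs i.succ) :
    ∑ a ∈ Vs i.succ \ W, ((badSets G Vs x d i).filter fun B => insert a W ⊆ B).card
      = (d - W.card) * ((badSets G Vs x d i).filter fun B => W ⊆ B).card := by
  have hrw : ∀ a ∈ Vs i.succ \ W,
      ((badSets G Vs x d i).filter fun B => insert a W ⊆ B)
        = ((badSets G Vs x d i).filter fun B => W ⊆ B).filter fun B => a ∈ B := by
    intro a _
    rw [Finset.filter_filter]
    apply Finset.filter_congr
    intro B _
    simp [Finset.insert_subset_iff, and_comm]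
  rw [Finset.sum_congr rfl fun a ha => by rw [hrw a ha]]
  have : ∀ a, (((badSets G Vs x d i).filter fun B => W ⊆ B).filter fun B => a ∈ B).card
      = ∑ B ∈ (badSets G Vs x d i).filter fun B => W ⊆ B, if a ∈ B then 1 else 0 := by
    intro a; rw [Finset.card_filter]
  rw [Finset.sum_congr rfl fun a _ => this a, Finset.sum_comm]
  rw [Finset.sum_congr rfl (g := fun B => (d - W.card)) ?_, Finset.sum_const, smul_eq_mul,
    mul_comm]
  intro B hB
  rw [mem_filter] at hB
  obtain ⟨hBbad, hWB⟩ := hB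
  rw [badSets, mem_filter, mem_powersetCard] at hBbad
  have hBsub : B ⊆ Vs i.succ := hBbad.1.1
  have hBcard : B.card = d := hBbad.1.2
  rw [← Finset.sum_filter]
  have : (Vs i.succ \ W).filter (fun a => a ∈ B) = B \ W := by
    ext a
    simp only [mem_filter, mem_sdiff]
    constructor
    · rintro ⟨⟨_, haW⟩, haB⟩; exact ⟨haB, haW⟩
    · rintro ⟨haB, haW⟩; exact ⟨⟨hBsub haB, haW⟩, haB⟩
  rw [this]
  simp [Finset.card_sdiff_of_subset hWB, hBcard]

/-- L2 : few choices extend a non-dangerous set to a dangerous one. -/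
lemma few_dangerous_extensions {i : Fin q'}
    (hsi : ((badSets G Vs x d i).card : ℝ) < (2 * (d : ℝ)) ^ (-(d : ℤ)) * (x.choose d))
    (hd : 1 ≤ d) {W : Finset α} (hWsub : W ⊆ Vs i.succ) (hWd : W.card < d)
    (hW : ¬ Dang G Vs x d i W) :
    ((Vs i.succ \ W).filter fun a => Dang G Vs x d i (insert a W)).card * (2 * d) < x := by
  have hxd : d ≤ x := x_ge_d hsi
  set t := W.card with ht
  set D := (Vs i.succ \ W).filter fun a => Dang G Vs x d i (insert a W) with hD
  set C' := Nat.choose (x - t - 1) (d - t - 1) with hC'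
  have hC'pos : 0 < C' := Nat.choose_pos (by omega)
  have hstep : ∀ a ∈ D, C' ≤
      ((badSets G Vs x d i).filter fun B => insert a W ⊆ B).card * (2 * d) ^ (d - t - 1) := by
    intro a ha
    rw [hD, mem_filter, mem_sdiff] at ha
    obtain ⟨⟨_, haW⟩, hdang⟩ := ha
    rw [Dang] at hdang
    rw [Finset.card_insert_of_notMem haW] at hdang
    have e1 : x - (t + 1) = x - t - 1 := by omega
    have e2 : d - (t + 1) = d - t - 1 := by omega
    rwa [e1, e2] at hdang
  have hsum1 : D.card * C' ≤
      (∑ a ∈ D, ((badSets G Vs x d i).filter fun B => insert a W ⊆ B).card) *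
        (2 * d) ^ (d - t - 1) := by
    rw [Finset.sum_mul]
    calc D.card * C' = ∑ _a ∈ D, C' := by rw [Finset.sum_const, smul_eq_mul]
      _ ≤ _ := Finset.sum_le_sum hstep
  have hsum2 : (∑ a ∈ D, ((badSets G Vs x d i).filter fun B => insert a W ⊆ B).card) ≤
      (d - t) * ((badSets G Vs x d i).filter fun B => W ⊆ B).card := by
    rw [← sum_insert_count hWsub]
    apply Finset.sum_le_sum_of_subset
    rw [hD]; exact Finset.filter_subset _ _
  set cW := ((badSets G Vs x d i).filter fun B => W ⊆ B).card with hcW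
  have hlt := notDang_lt hW
  rw [← hcW, ← ht] at hlt
  -- hlt : cW * (2*d)^(d-t) < choose (x-t) (d-t)
  have hident : (d - t) * Nat.choose (x - t) (d - t) = (x - t) * C' := by
    have h := Nat.add_one_mul_choose_eq (x - t - 1) (d - t - 1)
    have e1 : x - t - 1 + 1 = x - t := by omega
    have e2 : d - t - 1 + 1 = d - t := by omega
    rw [e1, e2] at h
    rw [hC', mul_comm]
    exact h.symm
  have hkey : D.card * C' * (2 * d) ≤ (d - t) * (cW * (2 * d) ^ (d - t)) := by
    have hp : (2 * d) ^ (d - t) = (2 * d) ^ (d - t - 1) * (2 * d) := by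
      rw [← pow_succ]
      congr 1
      omega
    calc D.card * C' * (2 * d)
        ≤ (∑ a ∈ D, ((badSets G Vs x d i).filter fun B => insert a W ⊆ B).card) *
            (2 * d) ^ (d - t - 1) * (2 * d) := Nat.mul_le_mul_right _ hsum1
      _ ≤ (d - t) * cW * (2 * d) ^ (d - t - 1) * (2 * d) := by
            apply Nat.mul_le_mul_right
            exact Nat.mul_le_mul_right _ hsum2
      _ = (d - t) * (cW * (2 * d) ^ (d - t)) := by rw [hp]; ring
  have hfinal : D.card * C' * (2 * d) < (x - t) * C' := by
    calc D.card * C' * (2 * d) ≤ (d - t) * (cW * (2 * d) ^ (d - t)) := hkey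
      _ < (d - t) * Nat.choose (x - t) (d - t) := by
          exact mul_lt_mul_of_pos_left hlt (by omega)
      _ = (x - t) * C' := hident
  have : D.card * (2 * d) < x - t := by
    have h := hfinal
    rw [show D.card * C' * (2 * d) = D.card * (2 * d) * C' by ring,
      show (x - t) * C' = (x - t) * C' by rfl] at h
    exact Nat.lt_of_mul_lt_mul_right (by rwa [mul_comm (x - t) C', mul_comm _ C'] at h)
  omega


section Main

variable (G) {β : Type*} [Fintype α] [Fintype β] [DecidableEq β]

def comps [Fintype α] (H : SimpleGraph β) [DecidableRel H.Adj] (S : Finset β) (f : β → α) :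
    Finset (β → α) :=
  Finset.univ.filter fun g => (∀ a ∈ S, g a = f a) ∧ Function.Injective g ∧
    ∀ a b, H.Adj a b → G.Adj (g a) (g b)

lemma main_ind
    (hnested : ∀ i j : Fin (q' + 1), i ≤ j → Vs j ⊆ Vs i)
    (n : ℕ) (hxn : 4 * n ≤ x) (hlast : x ≤ (Vs (Fin.last q')).card)
    (hsets : ∀ i : Fin q',
      ((badSets G Vs x d i).card : ℝ) < (2 * (d : ℝ)) ^ (-(d : ℤ)) * (x.choose d))
    (H : SimpleGraph β) [DecidableRel H.Adj] (hn : Fintype.card β = n)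
    (hdeg : ∀ v : β, (Finset.univ.filter fun a => H.Adj v a).card ≤ d)
    (c : β → Fin (q' + 1)) (hc : ∀ a b : β, H.Adj a b → c a ≠ c b) :
    ∀ (m : ℕ) (S : Finset β) (f : β → α), (Finset.univ \ S).card = m →
      (∀ s ∈ S, ∀ t, t ∉ S → c t ≤ c s) →
      Set.InjOn f ↑S →
      (∀ a ∈ S, f a ∈ Vs (c a)) →
      (∀ a ∈ S, ∀ b ∈ S, H.Adj a b → G.Adj (f a) (f b)) →
      (∀ k, k ∉ S → ¬ DangC G Vs x d (c k) ((S.filter fun a => H.Adj k a).image f)) →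
      ((x : ℝ) / 4) ^ m ≤ ((comps G H S f).card : ℝ) := by
  intro m
  induction m with
  | zero =>
    intro S f hm h1 h2 h3 h4 h5
    have hS : S = Finset.univ := by
      rw [Finset.card_eq_zero] at hm
      refine Finset.eq_univ_iff_forall.mpr fun a => ?_
      by_contra ha
      have : a ∈ Finset.univ \ S := Finset.mem_sdiff.mpr ⟨Finset.mem_univ _, ha⟩
      rw [hm] at this
      exact absurd this (Finset.notMem_empty _)
    subst hS
    have hf : f ∈ comps G H Finset.univ f := by
      rw [comps, Finset.mem_filter]
      refine ⟨Finset.mem_univ _, fun a _ => rfl, ?_, ?_⟩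
      · intro u v huv
        exact h2 (by simp) (by simp) huv
      · intro a b hab
        exact h4 a (Finset.mem_univ a) b (Finset.mem_univ b) hab
    rw [pow_zero]
    exact_mod_cast Finset.card_pos.mpr ⟨f, hf⟩
  | succ m ih =>
    intro S f hm h1 h2 h3 h4 h5
    have hne : (Finset.univ \ S).Nonempty := Finset.card_pos.mp (by omega)
    obtain ⟨b, hbmem, hbmax⟩ := Finset.exists_max_image (Finset.univ \ S) c hne
    have hbS : b ∉ S := (Finset.mem_sdiff.mp hbmem).2
    have hn1 : 1 ≤ n := by rw [← hn]; exact Fintype.card_pos_iff.mpr ⟨b⟩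
    have hx4 : 4 ≤ x := by omega
    have hcol : ∀ k, k ∉ S → ∀ s ∈ S, H.Adj k s → c k < c s := fun k hk s hs hadj =>
      lt_of_le_of_ne (h1 s hs k hk) (hc k s hadj)
    set Wb := (S.filter fun a => H.Adj b a).image f with hWbdef
    set C0 := (Vs (c b)).filter fun w => ∀ u ∈ Wb, G.Adj u w with hC0def
    have hC0sub : C0 ⊆ Vs (c b) := Finset.filter_subset _ _
    have hVsucc' : ∀ j : Fin (q' + 1), x ≤ (Vs j).card := fun j =>
      le_trans hlast (Finset.card_le_card (hnested _ _ (Fin.le_last _)))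
    have hC0card : x ≤ C0.card := by
      rcases eq_or_ne Wb ∅ with hWbe | hWbe
      · have hC0eq : C0 = Vs (c b) := by
          rw [hC0def, hWbe]
          exact Finset.filter_true_of_mem (by simp)
        rw [hC0eq]
        exact hVsucc' _
      · obtain ⟨w0, hw0⟩ := Finset.nonempty_iff_ne_empty.mpr hWbe
        rw [hWbdef, Finset.mem_image] at hw0
        obtain ⟨s0, hs0, _⟩ := hw0
        rw [Finset.mem_filter] at hs0
        have hcb : c b < c s0 := hcol b hbS s0 hs0.1 hs0.2
        have hcbne : c b ≠ Fin.last q' := Fin.ne_last_of_lt hcb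
        have hics : ((c b).castPred hcbne).castSucc = c b := Fin.castSucc_castPred _ _
        have hWbsub : Wb ⊆ Vs ((c b).castPred hcbne).succ := by
          rw [hWbdef]
          intro w hw
          rw [Finset.mem_image] at hw
          obtain ⟨s, hs, rfl⟩ := hw
          rw [Finset.mem_filter] at hs
          have hlt : c b < c s := hcol b hbS s hs.1 hs.2
          refine hnested _ _ ?_ (h3 s hs.1)
          rw [Fin.le_def]
          simp only [Fin.val_succ, Fin.coe_castPred]
          rw [Fin.lt_def] at hlt
          omega
        have hWbd : Wb.card ≤ d :=
          le_trans Finset.card_image_le (le_trans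
            (Finset.card_le_card (Finset.monotone_filter_left _ (Finset.subset_univ S)))
            (hdeg b))
        have hnd : ¬ Dang G Vs x d ((c b).castPred hcbne) Wb := fun hD =>
          h5 b hbS ⟨(c b).castPred hcbne, hics, hD⟩
        have := card_common_nbrs (hsets _) (hVsucc' _) hWbsub hWbd hnd
        rw [hC0def]
        rw [hics] at this
        convert this using 2 <;> congr!
    set E := C0 \ S.image f with hEdef
    set A := E.filter (fun a => ∀ k, k ∉ S → H.Adj b k →
      ¬ DangC G Vs x d (c k) (insert a ((S.filter fun a' => H.Adj k a').image f))) with hAdef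
    have hAE : A ⊆ E := Finset.filter_subset _ _
    have hAcard : (x : ℝ) / 4 ≤ (A.card : ℝ) := by
      have hScard : (S.card : ℝ) ≤ (n : ℝ) - 1 := by
        have hsub' : S ⊆ Finset.univ.erase b := fun s hs =>
          Finset.mem_erase.mpr ⟨by rintro rfl; exact hbS hs, Finset.mem_univ _⟩
        have h := Finset.card_le_card hsub'
        rw [Finset.card_erase_of_mem (Finset.mem_univ b), Finset.card_univ, hn] at h
        calc (S.card:ℝ) ≤ ((n-1 : ℕ) : ℝ) := by exact_mod_cast h
          _ = (n:ℝ) - 1 := by rw [Nat.cast_sub hn1]; norm_num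
      have hE1 : (x:ℝ) - ((n:ℝ) - 1) ≤ (E.card : ℝ) := by
        have h := Finset.card_le_card_sdiff_add_card (s := C0) (t := S.image f)
        have hc1 : (C0.card : ℝ) ≤ (E.card : ℝ) + ((S.image f).card : ℝ) := by exact_mod_cast h
        have hc2 : ((S.image f).card : ℝ) ≤ (S.card : ℝ) := by
          exact_mod_cast Finset.card_image_le
        have hc3 : (x:ℝ) ≤ (C0.card:ℝ) := by exact_mod_cast hC0card
        linarith
      set K := Finset.univ.filter (fun k => k ∉ S ∧ H.Adj b k) with hKdef
      have hKcard : K.card ≤ d := by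
        refine le_trans (Finset.card_le_card ?_) (hdeg b)
        intro k hk
        rw [hKdef, Finset.mem_filter] at hk
        exact Finset.mem_filter.mpr ⟨Finset.mem_univ _, hk.2.2⟩
      have hperk : ∀ k ∈ K, ((E.filter fun a =>
          DangC G Vs x d (c k) (insert a ((S.filter fun a' => H.Adj k a').image f))).card : ℝ)
            ≤ ((x:ℝ) - 1) / (2 * (d:ℝ)) := by
        intro k hk
        rw [hKdef, Finset.mem_filter] at hk
        obtain ⟨_, hkS, hkb⟩ := hk
        have hckb : c k < c b := lt_of_le_of_ne
          (hbmax k (Finset.mem_sdiff.mpr ⟨Finset.mem_univ _, hkS⟩)) (hc k b hkb.symm)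
        have hckne : c k ≠ Fin.last q' := Fin.ne_last_of_lt (lt_of_lt_of_le hckb (Fin.le_last _))
        have hiks : ((c k).castPred hckne).castSucc = c k := Fin.castSucc_castPred _ _
        have hbnb : b ∈ Finset.univ.filter fun a' => H.Adj k a' :=
          Finset.mem_filter.mpr ⟨Finset.mem_univ _, hkb.symm⟩
        have hd1 : 1 ≤ d := le_trans (Finset.card_pos.mpr ⟨b, hbnb⟩) (hdeg k)
        have hWksub : ((S.filter fun a' => H.Adj k a').image f) ⊆ Vs ((c k).castPred hckne).succ := by
          intro w hw
          rw [Finset.mem_image] at hw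
          obtain ⟨s, hs, rfl⟩ := hw
          rw [Finset.mem_filter] at hs
          have hlt : c k < c s := hcol k hkS s hs.1 hs.2
          refine hnested _ _ ?_ (h3 s hs.1)
          rw [Fin.le_def]
          simp only [Fin.val_succ, Fin.coe_castPred]
          rw [Fin.lt_def] at hlt
          omega
        have hWkcard : ((S.filter fun a' => H.Adj k a').image f).card < d := by
          have hsub2 : (S.filter fun a' => H.Adj k a') ⊆
              (Finset.univ.filter fun a' => H.Adj k a').erase b := by
            intro s hs
            rw [Finset.mem_filter] at hs
            exact Finset.mem_erase.mpr ⟨by rintro rfl; exact hbS hs.1,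
              Finset.mem_filter.mpr ⟨Finset.mem_univ _, hs.2⟩⟩
          have h6 := Finset.card_le_card hsub2
          rw [Finset.card_erase_of_mem hbnb] at h6
          have h7 := hdeg k
          have h8 : ((S.filter fun a' => H.Adj k a').image f).card ≤
              (S.filter fun a' => H.Adj k a').card := Finset.card_image_le
          have h9 : 1 ≤ (Finset.univ.filter fun a' => H.Adj k a').card :=
            Finset.card_pos.mpr ⟨b, hbnb⟩
          omega
        have hknd : ¬ Dang G Vs x d ((c k).castPred hckne)
            ((S.filter fun a' => H.Adj k a').image f) := fun hD =>
          h5 k hkS ⟨(c k).castPred hckne, hiks, hD⟩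
        have hL2 := few_dangerous_extensions (hsets _) hd1 hWksub hWkcard hknd
        have hsub3 : (E.filter fun a =>
            DangC G Vs x d (c k) (insert a ((S.filter fun a' => H.Adj k a').image f))) ⊆
            ((Vs ((c k).castPred hckne).succ \ ((S.filter fun a' => H.Adj k a').image f)).filter
              fun a => Dang G Vs x d ((c k).castPred hckne)
                (insert a ((S.filter fun a' => H.Adj k a').image f))) := by
          intro a ha
          rw [Finset.mem_filter] at ha
          obtain ⟨haE, haD⟩ := ha
          rw [hEdef, Finset.mem_sdiff] at haE
          obtain ⟨haC0, haim⟩ := haE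
          have haV : a ∈ Vs ((c k).castPred hckne).succ := by
            refine hnested _ _ ?_ (hC0sub haC0)
            rw [Fin.le_def]
            simp only [Fin.val_succ, Fin.coe_castPred]
            rw [Fin.lt_def] at hckb
            omega
          have haWk : a ∉ ((S.filter fun a' => H.Adj k a').image f) := fun hw =>
            haim (Finset.image_subset_image (Finset.filter_subset _ _) hw)
          refine Finset.mem_filter.mpr ⟨Finset.mem_sdiff.mpr ⟨haV, haWk⟩, ?_⟩
          obtain ⟨i', hi', hDang⟩ := haD
          have hieq : i' = (c k).castPred hckne := by
            apply Fin.castSucc_injective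
            rw [hi', hiks]
          rwa [hieq] at hDang
        have h10 := Finset.card_le_card hsub3
        rw [le_div_iff₀ (by positivity : (0:ℝ) < 2 * (d:ℝ))]
        have h11 : (E.filter fun a =>
            DangC G Vs x d (c k) (insert a ((S.filter fun a' => H.Adj k a').image f))).card
              * (2 * d) ≤ x - 1 := by
          have h11' := Nat.mul_le_mul_right (2 * d) h10
          omega
        calc ((E.filter fun a => DangC G Vs x d (c k)
              (insert a ((S.filter fun a' => H.Adj k a').image f))).card : ℝ) * (2 * (d:ℝ))
            = (((E.filter fun a => DangC G Vs x d (c k)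
              (insert a ((S.filter fun a' => H.Adj k a').image f))).card * (2 * d) : ℕ) : ℝ) := by
              push_cast; ring
          _ ≤ ((x - 1 : ℕ) : ℝ) := by exact_mod_cast h11
          _ ≤ (x:ℝ) - 1 := by
              rw [Nat.cast_sub (by omega)]
              norm_num
      have hEA : (E \ A) ⊆ K.biUnion (fun k => E.filter fun a =>
          DangC G Vs x d (c k) (insert a ((S.filter fun a' => H.Adj k a').image f))) := by
        intro a ha
        rw [Finset.mem_sdiff] at ha
        obtain ⟨haE, haA⟩ := ha
        rw [hAdef, Finset.mem_filter] at haA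
        push_neg at haA
        obtain ⟨k, hkS, hkb, hkD⟩ := haA haE
        rw [Finset.mem_biUnion]
        exact ⟨k, Finset.mem_filter.mpr ⟨Finset.mem_univ _, hkS, hkb⟩,
          Finset.mem_filter.mpr ⟨haE, hkD⟩⟩
      have hsum : ((E \ A).card : ℝ) ≤ ((x:ℝ) - 1) / 2 := by
        have h12 := Finset.card_le_card hEA
        have h13 := Finset.card_biUnion_le (s := K) (t := fun k => E.filter fun a =>
          DangC G Vs x d (c k) (insert a ((S.filter fun a' => H.Adj k a').image f)))
        rcases Finset.eq_empty_or_nonempty K with hKe | hKne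
        · have h0 : ((E \ A).card) = 0 := by
            rw [hKe] at h12
            simpa using h12
          rw [h0]
          simp only [Nat.cast_zero]
          have : (4:ℝ) ≤ (x:ℝ) := by exact_mod_cast hx4
          linarith
        · obtain ⟨k0, hk0⟩ := hKne
          have hd1 : 1 ≤ d := by
            rw [hKdef, Finset.mem_filter] at hk0
            have hbnb : b ∈ Finset.univ.filter fun a' => H.Adj k0 a' :=
              Finset.mem_filter.mpr ⟨Finset.mem_univ _, hk0.2.2.symm⟩
            exact le_trans (Finset.card_pos.mpr ⟨b, hbnb⟩) (hdeg k0)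
          have hnn : (0:ℝ) ≤ ((x:ℝ) - 1) / (2 * (d:ℝ)) := by
            apply div_nonneg
            · have : (4:ℝ) ≤ (x:ℝ) := by exact_mod_cast hx4
              linarith
            · positivity
          calc ((E \ A).card : ℝ)
              ≤ ((K.biUnion (fun k => E.filter fun a => DangC G Vs x d (c k)
                  (insert a ((S.filter fun a' => H.Adj k a').image f)))).card : ℝ) := by
                exact_mod_cast h12
            _ ≤ ((∑ k ∈ K, (E.filter fun a => DangC G Vs x d (c k)
                  (insert a ((S.filter fun a' => H.Adj k a').image f))).card : ℕ) : ℝ) := by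
                exact_mod_cast h13
            _ = ∑ k ∈ K, ((E.filter fun a => DangC G Vs x d (c k)
                  (insert a ((S.filter fun a' => H.Adj k a').image f))).card : ℝ) := by
                push_cast; rfl
            _ ≤ ∑ _k ∈ K, ((x:ℝ) - 1) / (2 * (d:ℝ)) := Finset.sum_le_sum hperk
            _ = (K.card : ℝ) * (((x:ℝ) - 1) / (2 * (d:ℝ))) := by
                rw [Finset.sum_const, nsmul_eq_mul]
            _ ≤ (d : ℝ) * (((x:ℝ) - 1) / (2 * (d:ℝ))) := by
                apply mul_le_mul_of_nonneg_right _ hnn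
                exact_mod_cast hKcard
            _ = ((x:ℝ) - 1) / 2 := by
                field_simp
      have hcs : ((E \ A).card : ℝ) + (A.card : ℝ) = (E.card : ℝ) := by
        exact_mod_cast Finset.card_sdiff_add_card_eq_card hAE
      have hxnr : (n:ℝ) ≤ (x:ℝ)/4 := by
        have : (4:ℝ) * (n:ℝ) ≤ (x:ℝ) := by exact_mod_cast hxn
        linarith
      linarith
    -- the inductive bound for each choice a ∈ A
    have hstep : ∀ a ∈ A, ((x : ℝ) / 4) ^ m ≤
        ((comps G H (insert b S) (Function.update f b a)).card : ℝ) := by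
      intro a haA
      have haprop := (Finset.mem_filter.mp haA).2
      have haE : a ∈ E := hAE haA
      rw [hEdef, Finset.mem_sdiff] at haE
      obtain ⟨haC0, haim⟩ := haE
      have haV : a ∈ Vs (c b) := hC0sub haC0
      have haadj : ∀ u ∈ Wb, G.Adj u a := (Finset.mem_filter.mp haC0).2
      apply ih
      · have hsd : Finset.univ \ insert b S = (Finset.univ \ S).erase b := by
          ext t
          simp only [Finset.mem_sdiff, Finset.mem_erase, Finset.mem_insert, Finset.mem_univ,
            true_and]
          tauto
        rw [hsd, Finset.card_erase_of_mem hbmem, hm]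
        omega
      · intro s hs t ht
        rcases Finset.mem_insert.mp hs with rfl | hsS
        · exact hbmax t (Finset.mem_sdiff.mpr ⟨Finset.mem_univ _,
            fun h => ht (Finset.mem_insert_of_mem h)⟩)
        · exact h1 s hsS t (fun h => ht (Finset.mem_insert_of_mem h))
      · intro u hu v hv huv
        rw [Finset.coe_insert, Set.mem_insert_iff] at hu hv
        rcases hu with rfl | hu <;> rcases hv with rfl | hv
        · rfl
        · exfalso
          rw [Function.update_self, Function.update_of_ne (by rintro rfl; exact hbS hv)] at huv
          exact haim (Finset.mem_image.mpr ⟨v, Finset.mem_coe.mp hv, huv.symm⟩)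
        · exfalso
          rw [Function.update_self, Function.update_of_ne (by rintro rfl; exact hbS hu)] at huv
          exact haim (Finset.mem_image.mpr ⟨u, Finset.mem_coe.mp hu, huv⟩)
        · rw [Function.update_of_ne (by rintro rfl; exact hbS hu),
            Function.update_of_ne (by rintro rfl; exact hbS hv)] at huv
          exact h2 hu hv huv
      · intro s hs
        rcases Finset.mem_insert.mp hs with rfl | hsS
        · rw [Function.update_self]
          exact haV
        · rw [Function.update_of_ne (by rintro rfl; exact hbS hsS)]
          exact h3 s hsS
      · intro u hu v hv hadj
        rcases Finset.mem_insert.mp hu with rfl | huS <;> rcases Finset.mem_insert.mp hv with rfl | hvS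
        · exact (H.loopless.irrefl _ hadj).elim
        · rw [Function.update_self, Function.update_of_ne (by rintro rfl; exact hbS hvS)]
          have hfv : f v ∈ Wb := by
            rw [hWbdef]
            exact Finset.mem_image_of_mem f (Finset.mem_filter.mpr ⟨hvS, hadj⟩)
          exact (haadj _ hfv).symm
        · rw [Function.update_of_ne (by rintro rfl; exact hbS huS), Function.update_self]
          have hfu : f u ∈ Wb := by
            rw [hWbdef]
            exact Finset.mem_image_of_mem f (Finset.mem_filter.mpr ⟨huS, hadj.symm⟩)
          exact haadj _ hfu
        · rw [Function.update_of_ne (by rintro rfl; exact hbS huS),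
            Function.update_of_ne (by rintro rfl; exact hbS hvS)]
          exact h4 u huS v hvS hadj
      · intro k hk
        have hkS : k ∉ S := fun h => hk (Finset.mem_insert_of_mem h)
        have hkb : k ≠ b := fun h => hk (h ▸ Finset.mem_insert_self b S)
        have himeq : (S.filter fun a' => H.Adj k a').image (Function.update f b a)
            = (S.filter fun a' => H.Adj k a').image f := by
          apply Finset.image_congr
          intro s hs
          rw [Finset.mem_coe, Finset.mem_filter] at hs
          have hsb : s ≠ b := fun hsb => hbS (hsb ▸ hs.1)
          simp [Function.update_of_ne hsb]
        by_cases hadj : H.Adj k b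
        · have hfe : ((insert b S).filter fun a' => H.Adj k a')
              = insert b (S.filter fun a' => H.Adj k a') := by
            rw [Finset.filter_insert, if_pos hadj]
          rw [hfe, Finset.image_insert, Function.update_self, himeq]
          exact haprop k hkS hadj.symm
        · have hfe : ((insert b S).filter fun a' => H.Adj k a')
              = S.filter fun a' => H.Adj k a' := by
            rw [Finset.filter_insert, if_neg hadj]
          rw [hfe, himeq]
          exact h5 k hkS
    have hdisj : ∀ a₁ ∈ A, ∀ a₂ ∈ A, a₁ ≠ a₂ →
        Disjoint (comps G H (insert b S) (Function.update f b a₁))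
          (comps G H (insert b S) (Function.update f b a₂)) := by
      intro a₁ _ a₂ _ hne12
      rw [Finset.disjoint_left]
      intro g hg1 hg2
      rw [comps, Finset.mem_filter] at hg1 hg2
      have e1 : g b = a₁ := by
        have := hg1.2.1 b (Finset.mem_insert_self _ _)
        rwa [Function.update_self] at this
      have e2 : g b = a₂ := by
        have := hg2.2.1 b (Finset.mem_insert_self _ _)
        rwa [Function.update_self] at this
      exact hne12 (e1 ▸ e2)
    have hsub : A.biUnion (fun a => comps G H (insert b S) (Function.update f b a))
        ⊆ comps G H S f := by
      intro g hg
      rw [Finset.mem_biUnion] at hg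
      obtain ⟨a, _, hg⟩ := hg
      rw [comps, Finset.mem_filter] at hg ⊢
      refine ⟨Finset.mem_univ _, fun s hs => ?_, hg.2.2⟩
      have := hg.2.1 s (Finset.mem_insert_of_mem hs)
      rwa [Function.update_of_ne (by rintro rfl; exact hbS hs)] at this
    have hx0 : (0:ℝ) ≤ (x:ℝ)/4 := by positivity
    calc ((x : ℝ) / 4) ^ (m + 1) = ((x:ℝ)/4) * ((x:ℝ)/4) ^ m := by ring
      _ ≤ (A.card : ℝ) * ((x:ℝ)/4) ^ m := by
          apply mul_le_mul_of_nonneg_right hAcard (by positivity)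
      _ ≤ ∑ a ∈ A, ((comps G H (insert b S) (Function.update f b a)).card : ℝ) := by
          calc (A.card : ℝ) * ((x:ℝ)/4) ^ m = ∑ _a ∈ A, ((x:ℝ)/4) ^ m := by
                rw [Finset.sum_const, nsmul_eq_mul]
            _ ≤ _ := Finset.sum_le_sum hstep
      _ = ((A.biUnion (fun a => comps G H (insert b S) (Function.update f b a))).card : ℝ) := by
          rw [Finset.card_biUnion hdisj]
          push_cast
          rfl
      _ ≤ ((comps G H S f).card : ℝ) := by exact_mod_cast Finset.card_le_card hsub

end Main

end FS42

/-- **Lemma 4.2 of Fox–Sudakov.** Suppose `G` is a graph with vertex set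
`V₁`, and `V₁ ⊇ V₂ ⊇ … ⊇ V_q` is a nested family of subsets (here `Vs i` is `V_{i+1}`,
`Vs 0 = V₁` is the whole vertex set, and there are `q ≥ 1`, i.e. `q' + 1`, sets) with
`|V_q| ≥ x ≥ 4n` such that for each `1 ≤ i < q`, all but fewer than `(2d)^{-d} C(x,d)`
of the `d`-element subsets `U ⊆ V_{i+1}` satisfy `|N(U) ∩ V_i| ≥ x`, where `N(U)` is the
common neighborhood of `U` in `G`. Then for every `q`-partite graph `H` with `n` vertices
and maximum degree at most `d`, there are at least `(x/4)^n` labeled copies of `H` in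
`G`. -/
theorem embedding_lemma_nested_sets {α β : Type*} [Fintype α] [Fintype β] [DecidableEq α]
    (G : SimpleGraph α) [DecidableRel G.Adj] (q' : ℕ) (Vs : Fin (q' + 1) → Finset α)
    (hV1 : Vs 0 = Finset.univ) (hnested : ∀ i j : Fin (q' + 1), i ≤ j → Vs j ⊆ Vs i)
    (x n d : ℕ) (hxn : 4 * n ≤ x) (hlast : x ≤ (Vs (Fin.last q')).card)
    (hsets : ∀ i : Fin q',
      ((((Vs i.succ).powersetCard d).filter fun U =>
          ((Vs i.castSucc).filter fun w => ∀ u ∈ U, G.Adj u w).card < x).card : ℝ) <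
        (2 * (d : ℝ)) ^ (-(d : ℤ)) * (x.choose d))
    (H : SimpleGraph β) (hn : Fintype.card β = n)
    (hdeg : ∀ v : β, (H.neighborSet v).ncard ≤ d)
    (c : β → Fin (q' + 1)) (hc : ∀ a b : β, H.Adj a b → c a ≠ c b) :
    ((x : ℝ) / 4) ^ n ≤
      ({f : β → α | Function.Injective f ∧
          ∀ a b : β, H.Adj a b → G.Adj (f a) (f b)}.ncard : ℝ) := by
  classical
  by_cases hne : Nonempty (β → α)
  · obtain ⟨f0⟩ := hne
    have hdeg' : ∀ v : β, (Finset.univ.filter fun a => H.Adj v a).card ≤ d := by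
      intro v
      have h := hdeg v
      have he : (H.neighborSet v) = ↑(Finset.univ.filter fun a => H.Adj v a) := by
        ext a
        simp [SimpleGraph.mem_neighborSet]
      rwa [he, Set.ncard_coe_finset] at h
    have hsets' : ∀ i : Fin q',
        ((FS42.badSets G Vs x d i).card : ℝ) < (2 * (d : ℝ)) ^ (-(d : ℤ)) * (x.choose d) := by
      intro i
      have h := hsets i
      have he : FS42.badSets G Vs x d i = ((Vs i.succ).powersetCard d).filter fun U =>
          ((Vs i.castSucc).filter fun w => ∀ u ∈ U, G.Adj u w).card < x := by
        rw [FS42.badSets]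
        congr!
      rw [he]
      exact h
    have key := FS42.main_ind G (Vs := Vs) (x := x) (d := d) hnested n hxn hlast hsets'
        H hn hdeg' c hc n ∅ f0 (by simp [hn]) (by simp) (by simp) (by simp) (by simp) ?_
    · have heq : {f : β → α | Function.Injective f ∧
          ∀ a b : β, H.Adj a b → G.Adj (f a) (f b)}
          = ↑(Finset.univ.filter fun f : β → α => Function.Injective f ∧
              ∀ a b : β, H.Adj a b → G.Adj (f a) (f b)) := by
        ext g
        simp
      rw [heq, Set.ncard_coe_finset]
      refine le_trans key ?_
      have hsub : FS42.comps G H ∅ f0 ⊆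
          Finset.univ.filter fun f : β → α => Function.Injective f ∧
            ∀ a b : β, H.Adj a b → G.Adj (f a) (f b) := by
        intro g hg
        rw [FS42.comps, Finset.mem_filter] at hg
        exact Finset.mem_filter.mpr ⟨Finset.mem_univ _, hg.2.2.1, hg.2.2.2⟩
      exact_mod_cast Finset.card_le_card hsub
    · intro k _
      rintro ⟨i, _, hD⟩
      simp only [Finset.filter_empty, Finset.image_empty] at hD
      exact FS42.notDang_empty (hsets' i) hD
  · have hβ : Nonempty β := by
      by_contra h
      exact hne ⟨fun b => absurd ⟨b⟩ h⟩
    have hα : IsEmpty α := by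
      by_contra h
      rw [not_isEmpty_iff] at h
      exact hne ⟨fun _ => h.some⟩
    have hx : x = 0 := by
      have h1 := hlast
      have h2 : (Vs (Fin.last q')).card = 0 := by
        simp [Finset.card_eq_zero, Finset.eq_empty_of_isEmpty]
      omega
    have hn0 : n ≠ 0 := by
      rw [← hn]
      have := Fintype.card_pos_iff.mpr hβ
      omega
    rw [hx]
    norm_num
    rw [zero_pow hn0]
    positivity
end
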